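/- arXiv:1004.0241 — 3 statements merged into one kernel-verified Lean document; each statement's English description precedes it below -/
import Mathlib

section
/- Let K be a field and n ≥ 3. Let H be a linear hyperplane of M_n(K) (i.e., a linear subspace of dimension n² - 1). Then every matrix of M_n(K) is a product BC of two matrices B, C ∈ H. -/
open Matrix

namespace HypProd

variable {K : Type*} [Field K] {n : ℕ}

/-- Permutation matrix: column `j` is `e_{π j}`. -/
def Pm (π : Equiv.Perm (Fin n)) : Matrix (Fin n) (Fin n) K :=
  Matrix.of fun i j => if π j = i then 1 else 0

lemma Pm_apply (π : Equiv.Perm (Fin n)) (i j : Fin n) :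
    (Pm π : Matrix (Fin n) (Fin n) K) i j = if π j = i then 1 else 0 := rfl

lemma Pm_mul_Pm (π ρ : Equiv.Perm (Fin n)) :
    (Pm π : Matrix (Fin n) (Fin n) K) * Pm ρ = Pm (π * ρ) := by
  ext i j
  rw [mul_apply]
  rw [Finset.sum_eq_single (ρ j)]
  · simp [Pm_apply, Equiv.Perm.mul_apply]; rfl
  · intro b _ hb
    simp [Pm_apply, Ne.symm hb]
  · simp

lemma Pm_one : (Pm 1 : Matrix (Fin n) (Fin n) K) = 1 := by
  ext i j
  by_cases h : i = j <;> simp [Pm_apply, one_apply, h, eq_comm]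

lemma Pm_mul_Pm_inv (π : Equiv.Perm (Fin n)) :
    (Pm π : Matrix (Fin n) (Fin n) K) * Pm π⁻¹ = 1 := by
  rw [Pm_mul_Pm, mul_inv_cancel, Pm_one]

lemma Pm_inv_mul_Pm (π : Equiv.Perm (Fin n)) :
    (Pm π⁻¹ : Matrix (Fin n) (Fin n) K) * Pm π = 1 := by
  rw [Pm_mul_Pm, inv_mul_cancel, Pm_one]

lemma trace_mul_Pm (X : Matrix (Fin n) (Fin n) K) (π : Equiv.Perm (Fin n)) :
    trace (X * Pm π) = ∑ i, X i (π i) := by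
  rw [trace]
  congr 1
  ext i
  rw [diag_apply, mul_apply, Finset.sum_eq_single (π i)]
  · simp [Pm_apply]
  · intro b _ hb
    simp [Pm_apply, Ne.symm hb]
  · simp

lemma trace_mul_E (X : Matrix (Fin n) (Fin n) K) (k l : Fin n) :
    trace (X * Matrix.single k l (1 : K)) = X l k := by
  rw [trace]
  rw [Finset.sum_eq_single l]
  · rw [diag_apply, mul_apply, Finset.sum_eq_single k]
    · simp [Matrix.single]
    · intro b _ hb
      simp only [Matrix.single, of_apply]
      rw [if_neg (by tauto), mul_zero]
    · simp
  · intro b _ hb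
    rw [diag_apply, mul_apply]
    apply Finset.sum_eq_zero
    intro m _
    simp only [Matrix.single, of_apply]
    rw [if_neg (by tauto), mul_zero]
  · simp

lemma E_mul_Pm_inv (k l : Fin n) (π : Equiv.Perm (Fin n)) :
    Matrix.single k l (1 : K) * Pm π⁻¹ = Matrix.single k (π l) 1 := by
  ext i j
  rw [mul_apply, Finset.sum_eq_single (π⁻¹ j)]
  · by_cases h1 : i = k
    · subst h1
      by_cases h2 : l = π⁻¹ j
      · have h3 : π l = j := by rw [h2]; simp
        simp [Matrix.single, Pm_apply, h2, h3]
      · have h3 : ¬ (π l = j) := fun h => h2 (by rw [← h]; simp)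
        simp [Matrix.single, Pm_apply, h2, h3]; exact h2
    · simp only [Matrix.single, of_apply]
      rw [if_neg (by tauto), if_neg (by tauto), zero_mul]
  · intro b _ hb
    rw [Pm_apply, if_neg (Ne.symm hb), mul_zero]
  · simp



variable {m : ℕ}

/-- The general solving scheme: `B = P_π (1 + s E_{kl} + t E_{pl})`. -/
lemma gsl (δ : Fin n → K) (W : Matrix (Fin n) (Fin n) K) (π : Equiv.Perm (Fin n))
    (l k p : Fin n) (hkl : k ≠ l) (hpl : p ≠ l) (hkp : k ≠ p) (s t : K)
    (h1 : (∑ i, if i = π i then δ i else 0)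
        + s * (if π k = l then δ l else 0) + t * (if π p = l then δ l else 0) = 0)
    (h2 : (∑ i, W i (π⁻¹ i)) = s * W (π l) k + t * W (π l) p) :
    ∃ B Bi : Matrix (Fin n) (Fin n) K, B * Bi = 1 ∧ Bi * B = 1 ∧
      trace (Matrix.diagonal δ * B) = 0 ∧ trace (W * Bi) = 0 := by
  set Ek : Matrix (Fin n) (Fin n) K := Matrix.single k l 1 with hEk
  set Ep : Matrix (Fin n) (Fin n) K := Matrix.single p l 1 with hEp
  set N : Matrix (Fin n) (Fin n) K := s • Ek + t • Ep with hN
  have hNN : N * N = 0 := by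
    have h1 : Ek * Ek = 0 := Matrix.single_mul_single_of_ne (h := Ne.symm hkl) ..
    have h2 : Ek * Ep = 0 := Matrix.single_mul_single_of_ne (h := Ne.symm hpl) ..
    have h3 : Ep * Ek = 0 := Matrix.single_mul_single_of_ne (h := Ne.symm hkl) ..
    have h4 : Ep * Ep = 0 := Matrix.single_mul_single_of_ne (h := Ne.symm hpl) ..
    rw [hN]
    rw [add_mul, smul_mul_assoc, smul_mul_assoc, mul_add, mul_add]
    rw [mul_smul_comm, mul_smul_comm, mul_smul_comm, mul_smul_comm, h1, h2, h3, h4]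
    simp
  refine ⟨Pm π * (1 + N), (1 - N) * Pm π⁻¹, ?_, ?_, ?_, ?_⟩
  · calc Pm π * (1 + N) * ((1 - N) * Pm π⁻¹)
        = Pm π * ((1 + N) * (1 - N)) * Pm π⁻¹ := by noncomm_ring
      _ = Pm π * Pm π⁻¹ := by rw [show (1 + N) * (1 - N) = 1 - N * N by noncomm_ring, hNN,
            sub_zero, mul_one]
      _ = 1 := Pm_mul_Pm_inv π
  · calc (1 - N) * Pm π⁻¹ * (Pm π * (1 + N))
        = (1 - N) * (Pm π⁻¹ * Pm π) * (1 + N) := by noncomm_ring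
      _ = (1 - N) * (1 + N) := by rw [Pm_inv_mul_Pm]; noncomm_ring
      _ = 1 := by rw [show (1 - N) * (1 + N) = 1 - N * N by noncomm_ring, hNN, sub_zero]
  · have expand : Matrix.diagonal δ * (Pm π * (1 + N))
        = Matrix.diagonal δ * Pm π + s • (Matrix.diagonal δ * Pm π * Ek)
          + t • (Matrix.diagonal δ * Pm π * Ep) := by
      rw [hN]; noncomm_ring
    rw [expand, trace_add, trace_add, trace_smul, trace_smul, trace_mul_Pm,
      hEk, hEp, trace_mul_E, trace_mul_E]
    have e1 : ∀ i, (Matrix.diagonal δ) i (π i) = if i = π i then δ i else 0 := by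
      intro i; rw [diagonal_apply]
    have e2 : ((Matrix.diagonal δ * Pm π : Matrix (Fin n) (Fin n) K)) l k = if π k = l then δ l else 0 := by
      rw [diagonal_mul]
      show δ l * (if π k = l then 1 else 0) = _
      by_cases h : π k = l <;> simp [h]
    have e3 : ((Matrix.diagonal δ * Pm π : Matrix (Fin n) (Fin n) K)) l p = if π p = l then δ l else 0 := by
      rw [diagonal_mul]
      show δ l * (if π p = l then 1 else 0) = _
      by_cases h : π p = l <;> simp [h]
    rw [e2, e3]
    simp only [smul_eq_mul]
    rw [show (∑ i, (Matrix.diagonal δ : Matrix (Fin n) (Fin n) K) i (π i))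
        = ∑ i, (if i = π i then δ i else 0) from Finset.sum_congr rfl (fun i _ => e1 i)]
    exact h1
  · have expand : W * ((1 - N) * Pm π⁻¹)
        = W * Pm π⁻¹ - s • (W * (Ek * Pm π⁻¹)) - t • (W * (Ep * Pm π⁻¹)) := by
      rw [hN]; noncomm_ring
    rw [expand, trace_sub, trace_sub, trace_smul, trace_smul,
      hEk, hEp, E_mul_Pm_inv, E_mul_Pm_inv, trace_mul_E, trace_mul_E]
    have : trace (W * Pm π⁻¹) = ∑ i, W i (π⁻¹ i) := trace_mul_Pm W π⁻¹
    rw [this, h2]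
    simp only [smul_eq_mul]
    ring


lemma exists_third (x y : Fin (m+3)) : ∃ z, z ≠ x ∧ z ≠ y := by
  refine ⟨⟨if x.val = 0 ∨ y.val = 0 then (if x.val = 1 ∨ y.val = 1 then 2 else 1) else 0,
    by split_ifs <;> omega⟩, ?_, ?_⟩ <;>
  · simp only [Ne, Fin.ext_iff]
    split_ifs <;> omega

lemma main (δ : Fin (m+3) → K) (hδ : δ ≠ 0) (W : Matrix (Fin (m+3)) (Fin (m+3)) K) :
    ∃ B Bi : Matrix (Fin (m+3)) (Fin (m+3)) K, B * Bi = 1 ∧ Bi * B = 1 ∧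
      trace (Matrix.diagonal δ * B) = 0 ∧ trace (W * Bi) = 0 := by
  classical
  obtain ⟨a, hδa⟩ : ∃ a, δ a ≠ 0 := by
    by_contra h; push_neg at h; exact hδ (funext fun i => h i)
  by_cases hW : W = 0
  · -- W = 0 : take a fixed-point-free permutation matrix
    set π := finRotate (m+3) with hπ
    have hfp : ∀ i : Fin (m+3), i ≠ π i := by
      intro i h
      have hval : i.val = ((i + 1 : Fin (m+3))).val := by
        rw [hπ] at h; rw [← finRotate_succ_apply]; exact congrArg Fin.val h
      rw [Fin.val_add, Fin.val_one] at hval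
      rcases Nat.lt_or_ge (i.val + 1) (m+3) with hlt | hge
      · rw [Nat.mod_eq_of_lt hlt] at hval; omega
      · have hl : i.val + 1 = m + 3 := le_antisymm i.isLt hge
        rw [hl, Nat.mod_self] at hval; omega
    refine ⟨Pm π, Pm π⁻¹, Pm_mul_Pm_inv π, Pm_inv_mul_Pm π, ?_, by simp [hW]⟩
    rw [trace_mul_Pm]
    apply Finset.sum_eq_zero
    intro i _
    rw [diagonal_apply, if_neg (hfp i)]
  -- W ≠ 0
  obtain ⟨v0, q0, hW0⟩ : ∃ v q, W v q ≠ 0 := by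
    by_contra h; push_neg at h; exact hW (by ext i j; simpa using h i j)
  by_cases hgen : ∃ v q l, W v q ≠ 0 ∧ δ l ≠ 0 ∧ l ≠ v ∧ l ≠ q
  · -- generic case
    obtain ⟨v, q, l, hWvq, hδl, hlv, hlq⟩ := hgen
    obtain ⟨k, hkl, hkq⟩ := exists_third l q
    set π := Equiv.swap k v * Equiv.swap k l with hπ
    have hπk : π k = l := by
      rw [hπ, Equiv.Perm.mul_apply, Equiv.swap_apply_left,
        Equiv.swap_apply_of_ne_of_ne (Ne.symm hkl) hlv]
    have hπl : π l = v := by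
      rw [hπ, Equiv.Perm.mul_apply, Equiv.swap_apply_right, Equiv.swap_apply_left]
    have hπq : π q ≠ l := by
      rw [hπ, Equiv.Perm.mul_apply,
        Equiv.swap_apply_of_ne_of_ne (Ne.symm hkq) (Ne.symm hlq)]
      by_cases hqv : q = v
      · rw [hqv, Equiv.swap_apply_right]; exact hkl
      · rw [Equiv.swap_apply_of_ne_of_ne (Ne.symm hkq) hqv]; exact Ne.symm hlq
    set T1 : K := ∑ i, if i = π i then δ i else 0 with hT1
    set T2 : K := ∑ i, W i (π⁻¹ i) with hT2
    refine gsl δ W π l k q hkl (Ne.symm hlq) hkq (-T1/δ l) ((T2 - (-T1/δ l) * W v k)/W v q)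
      ?_ ?_
    · rw [if_pos hπk, if_neg hπq, mul_zero, add_zero, div_mul_cancel₀ _ hδl, ← hT1,
        add_neg_cancel]
    · rw [hπl, div_mul_cancel₀ _ hWvq, ← hT2]; ring
  · have hprop : ∀ v q l, W v q ≠ 0 → δ l ≠ 0 → l = v ∨ l = q := by
      intro v q l h1 h2
      by_contra hcon
      push_neg at hcon
      exact hgen ⟨v, q, l, h1, h2, hcon.1, hcon.2⟩
    by_cases htwo : ∃ a b, δ a ≠ 0 ∧ δ b ≠ 0 ∧ a ≠ b
    · -- two distinct elements in the support of δ
      obtain ⟨a, b, hδa, hδb, hab⟩ := htwo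
      have hWoff : ∀ v q, W v q ≠ 0 → (v = a ∧ q = b) ∨ (v = b ∧ q = a) := by
        intro v q h
        rcases hprop v q a h hδa with h1 | h1 <;> rcases hprop v q b h hδb with h2 | h2
        · exact absurd (h1.trans h2.symm) hab
        · exact Or.inl ⟨h1.symm, h2.symm⟩
        · exact Or.inr ⟨h2.symm, h1.symm⟩
        · exact absurd (h1.trans h2.symm) hab
      have hS : ∀ i, δ i ≠ 0 → i = a ∨ i = b := by
        intro i hi
        rcases hWoff v0 q0 hW0 with ⟨h1, h2⟩ | ⟨h1, h2⟩ <;>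
          rcases hprop v0 q0 i hW0 hi with h | h
        · exact Or.inl (h.trans h1)
        · exact Or.inr (h.trans h2)
        · exact Or.inr (h.trans h1)
        · exact Or.inl (h.trans h2)
      have hWdiag : ∀ x, W x x = 0 := by
        intro x
        by_contra hne
        rcases hWoff x x hne with ⟨h1, h2⟩ | ⟨h1, h2⟩
        · exact hab (h1.symm.trans h2)
        · exact hab (h2.symm.trans h1)
      by_cases hβ : W b a = 0
      · -- 3-cycle a → b → c → a
        obtain ⟨c, hca, hcb⟩ := exists_third a b
        set π := Equiv.swap a c * Equiv.swap a b with hπ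
        have hπa : π a = b := by
          rw [hπ, Equiv.Perm.mul_apply, Equiv.swap_apply_left,
            Equiv.swap_apply_of_ne_of_ne (Ne.symm hab) (Ne.symm hcb)]
        have hπb : π b = c := by
          rw [hπ, Equiv.Perm.mul_apply, Equiv.swap_apply_right, Equiv.swap_apply_left]
        have hπc : π c = a := by
          rw [hπ, Equiv.Perm.mul_apply,
            Equiv.swap_apply_of_ne_of_ne hca hcb, Equiv.swap_apply_right]
        refine ⟨Pm π, Pm π⁻¹, Pm_mul_Pm_inv π, Pm_inv_mul_Pm π, ?_, ?_⟩
        · rw [trace_mul_Pm]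
          apply Finset.sum_eq_zero
          intro i _
          rw [diagonal_apply]
          split_ifs with h
          · by_contra hne
            rcases hS i hne with rfl | rfl
            · exact hab (h.trans hπa)
            · exact hcb (h.trans hπb).symm
          · rfl
        · rw [trace_mul_Pm]
          apply Finset.sum_eq_zero
          intro i _
          by_contra hne
          rcases hWoff i (π⁻¹ i) hne with ⟨rfl, h2⟩ | ⟨rfl, h2⟩
          · -- i = a, π⁻¹ a = b, so π b = a, but π b = c ≠ a
            have : π b = i := by rw [← h2]; simp
            rw [hπb] at this
            exact hca this
          · -- i = b, π⁻¹ b = a, so π a = b: entry W b a = 0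
            have : π a = i := by rw [← h2]; simp
            rw [hπa] at this
            -- this : b = i, fine; entry is W b (π⁻¹ b); π a = b means π⁻¹ b = a
            have hinv : π⁻¹ i = a := h2
            rw [hinv] at hne
            exact hne hβ
      · by_cases hα : W a b = 0
        · -- 3-cycle a → c → b → a
          obtain ⟨c, hca, hcb⟩ := exists_third a b
          set π := Equiv.swap a b * Equiv.swap a c with hπ
          have hπa : π a = c := by
            rw [hπ, Equiv.Perm.mul_apply, Equiv.swap_apply_left,
              Equiv.swap_apply_of_ne_of_ne hca hcb]
          have hπc : π c = b := by
            rw [hπ, Equiv.Perm.mul_apply, Equiv.swap_apply_right, Equiv.swap_apply_left]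
          have hπb : π b = a := by
            rw [hπ, Equiv.Perm.mul_apply,
              Equiv.swap_apply_of_ne_of_ne (Ne.symm hab) (Ne.symm hcb),
              Equiv.swap_apply_right]
          refine ⟨Pm π, Pm π⁻¹, Pm_mul_Pm_inv π, Pm_inv_mul_Pm π, ?_, ?_⟩
          · rw [trace_mul_Pm]
            apply Finset.sum_eq_zero
            intro i _
            rw [diagonal_apply]
            split_ifs with h
            · by_contra hne
              rcases hS i hne with rfl | rfl
              · exact hca (h.trans hπa).symm
              · exact hab (h.trans hπb).symm
            · rfl
          · rw [trace_mul_Pm]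
            apply Finset.sum_eq_zero
            intro i _
            by_contra hne
            rcases hWoff i (π⁻¹ i) hne with ⟨rfl, h2⟩ | ⟨rfl, h2⟩
            · -- i = a, π⁻¹ a = b: π b = a indeed! entry W a b = 0 = α
              have hinv : π⁻¹ i = b := h2
              rw [hinv] at hne
              exact hne hα
            · -- i = b, π⁻¹ b = a: π a = b, but π a = c ≠ b
              have : π a = i := by rw [← h2]; simp
              rw [hπa] at this
              exact hcb this
        · -- both W a b ≠ 0 and W b a ≠ 0 : monomial construction
          set σ := Equiv.swap a b with hσ
          set d : Fin (m+3) → K := fun i => if i = b then -(W a b)/(W b a) else 1 with hd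
          set d' : Fin (m+3) → K := fun i => if i = b then -(W b a)/(W a b) else 1 with hd'
          have hdd' : (fun i => d i * d' i) = fun _ => (1 : K) := by
            funext i
            rw [hd, hd']
            dsimp only
            split_ifs with h
            · field_simp
            · rw [mul_one]
          have hPP : (Pm σ : Matrix (Fin (m+3)) (Fin (m+3)) K) * Pm σ = 1 := by
            rw [Pm_mul_Pm, Equiv.swap_mul_self, Pm_one]
          refine ⟨Pm σ * Matrix.diagonal d, Matrix.diagonal d' * Pm σ, ?_, ?_, ?_, ?_⟩
          · calc Pm σ * Matrix.diagonal d * (Matrix.diagonal d' * Pm σ)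
                = Pm σ * (Matrix.diagonal d * Matrix.diagonal d') * Pm σ := by
                  rw [Matrix.mul_assoc, Matrix.mul_assoc, Matrix.mul_assoc]
              _ = Pm σ * Pm σ := by
                  rw [diagonal_mul_diagonal, hdd', diagonal_one, Matrix.mul_one]
              _ = 1 := hPP
          · calc Matrix.diagonal d' * Pm σ * (Pm σ * Matrix.diagonal d)
                = Matrix.diagonal d' * (Pm σ * Pm σ) * Matrix.diagonal d := by
                  rw [Matrix.mul_assoc, Matrix.mul_assoc, Matrix.mul_assoc]
              _ = Matrix.diagonal d' * Matrix.diagonal d := by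
                  rw [hPP, Matrix.mul_one]
              _ = 1 := by
                  rw [diagonal_mul_diagonal, show (fun i => d' i * d i) = fun _ => (1:K) by
                    funext i
                    have h := congrFun hdd' i
                    rw [mul_comm] at h
                    exact h, diagonal_one]
          · rw [← Matrix.mul_assoc, trace]
            apply Finset.sum_eq_zero
            intro i _
            rw [diag_apply, mul_diagonal, diagonal_mul, Pm_apply]
            by_cases hia : i = a
            · subst hia
              rw [if_neg (show ¬ σ i = i by rw [hσ, Equiv.swap_apply_left]; exact Ne.symm hab)]
              ring
            · by_cases hib : i = b
              · subst hib
                rw [if_neg (show ¬ σ i = i by rw [hσ, Equiv.swap_apply_right]; exact hab)]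
                ring
              · have : δ i = 0 := by
                  by_contra hne
                  rcases hS i hne with rfl | rfl
                  · exact hia rfl
                  · exact hib rfl
                rw [this]
                ring
          · rw [← Matrix.mul_assoc, trace_mul_Pm]
            have hvanish : ∀ x ∈ Finset.univ, x ∉ ({a, b} : Finset (Fin (m+3))) →
                (W * Matrix.diagonal d') x (σ x) = 0 := by
              intro x _ hx
              simp only [Finset.mem_insert, Finset.mem_singleton] at hx
              push_neg at hx
              rw [hσ] at *
              rw [Equiv.swap_apply_of_ne_of_ne hx.1 hx.2, mul_diagonal, hWdiag, zero_mul]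
            rw [← Finset.sum_subset (Finset.subset_univ ({a, b} : Finset (Fin (m+3)))) hvanish]
            rw [Finset.sum_pair hab]
            rw [mul_diagonal, mul_diagonal]
            rw [hσ, Equiv.swap_apply_left, Equiv.swap_apply_right]
            rw [hd']
            dsimp only
            rw [if_pos rfl, if_neg hab]
            field_simp
            ring
    · -- the support of δ is the single element a
      have hSa : ∀ i, δ i ≠ 0 → i = a := by
        intro i hi
        by_contra hia
        exact htwo ⟨i, a, hi, hδa, hia⟩
      by_cases hrow : ∃ j, W a j ≠ 0
      · obtain ⟨j, hWaj⟩ := hrow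
        obtain ⟨l, hla, hlj⟩ := exists_third a j
        obtain ⟨k, hkl, hkj⟩ := exists_third l j
        set π := Equiv.swap l a with hπ
        have hπl : π l = a := by rw [hπ, Equiv.swap_apply_left]
        have hδl : δ l = 0 := by
          by_contra h
          exact hla (hSa l h)
        set T2 : K := ∑ i, W i (π⁻¹ i) with hT2
        refine gsl δ W π l k j hkl (Ne.symm hlj) hkj 0 (T2 / W a j) ?_ ?_
        · rw [hδl]
          have hsum : (∑ i, if i = π i then δ i else 0) = 0 := by
            apply Finset.sum_eq_zero
            intro i _
            split_ifs with h
            · by_contra hne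
              have hia : i = a := hSa i hne
              subst hia
              rw [hπ, Equiv.swap_apply_right] at h
              exact hla h.symm
            · rfl
          rw [hsum]
          simp
        · rw [hπl, zero_mul, zero_add, div_mul_cancel₀ _ hWaj, ← hT2]
      · -- all nonzero entries in column a
        have hWrow : ∀ j, W a j = 0 := by push_neg at hrow; exact hrow
        have hv0a : v0 ≠ a := by
          intro h
          rw [h] at hW0
          exact hW0 (hWrow q0)
        have hq0a : q0 = a := by
          rcases hprop v0 q0 a hW0 hδa with h | h
          · exact absurd h.symm hv0a
          · exact h.symm
        have hWva : W v0 a ≠ 0 := by rw [← hq0a]; exact hW0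
        obtain ⟨c, hca, hcv⟩ := exists_third a v0
        set π := Equiv.swap a c with hπ
        have hπv : π v0 = v0 := by
          rw [hπ, Equiv.swap_apply_of_ne_of_ne hv0a (Ne.symm hcv)]
        set T2 : K := ∑ i, W i (π⁻¹ i) with hT2
        refine gsl δ W π v0 c a hcv (Ne.symm hv0a) hca 0 (T2 / W v0 a) ?_ ?_
        · have hδv : δ v0 = 0 := by
            by_contra h
            exact hv0a (hSa v0 h)
          rw [hδv]
          have hsum : (∑ i, if i = π i then δ i else 0) = 0 := by
            apply Finset.sum_eq_zero
            intro i _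
            split_ifs with h
            · by_contra hne
              have hia : i = a := hSa i hne
              subst hia
              rw [hπ, Equiv.swap_apply_left] at h
              exact hca h.symm
            · rfl
          rw [hsum]
          simp
        · rw [hπv, zero_mul, zero_add, div_mul_cancel₀ _ hWva, ← hT2]


end HypProd

theorem hyperplane_product_of_two (K : Type*) [Field K] (n : ℕ) (hn : 3 ≤ n)
    (H : Submodule K (Matrix (Fin n) (Fin n) K))
    (hH : Module.finrank K H = n ^ 2 - 1) (M : Matrix (Fin n) (Fin n) K) :
    ∃ B ∈ H, ∃ C ∈ H, M = B * C := by
  classical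
  have hsq : n ^ 2 = n * n := sq n
  have h9 : 9 ≤ n * n := Nat.mul_le_mul hn hn
  have hdim : Module.finrank K (Matrix (Fin n) (Fin n) K) = n * n := by
    rw [Module.finrank_matrix]
    simp [Module.finrank_self]
  have hne : H ≠ ⊤ := by
    intro h
    rw [h, finrank_top, hdim] at hH
    omega
  obtain ⟨φ, hφ0, hφmap⟩ :=
    H.exists_dual_map_eq_bot_of_lt_top (lt_top_iff_ne_top.mpr hne) inferInstance
  have hle : H ≤ LinearMap.ker φ := by
    intro x hx
    have hmem : φ x ∈ Submodule.map φ H := Submodule.mem_map_of_mem hx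
    rw [hφmap] at hmem
    exact LinearMap.mem_ker.mpr ((Submodule.mem_bot K).mp hmem)
  have hkerrank : Module.finrank K (LinearMap.ker φ) = n * n - 1 := by
    have hr := LinearMap.finrank_range_add_finrank_ker φ
    rw [hdim] at hr
    have hrange : Module.finrank K (LinearMap.range φ) = 1 := by
      have hbot : LinearMap.range φ ≠ ⊥ := by
        intro hb
        exact hφ0 (LinearMap.range_eq_bot.mp hb)
      have h1 : Module.finrank K (LinearMap.range φ) ≤ Module.finrank K K :=
        Submodule.finrank_le _
      rw [Module.finrank_self] at h1
      have h2 : Module.finrank K (LinearMap.range φ) ≠ 0 := by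
        intro hz
        exact hbot (Submodule.finrank_eq_zero.mp hz)
      omega
    omega
  have hHker : H = LinearMap.ker φ :=
    Submodule.eq_of_le_of_finrank_le hle (by rw [hkerrank, hH]; omega)
  set A : Matrix (Fin n) (Fin n) K := Matrix.of fun i j => φ (Matrix.single j i 1) with hA
  have htr : ∀ X : Matrix (Fin n) (Fin n) K, trace (A * X) = φ X := by
    intro X
    have e1 : trace (A * X) = ∑ i, ∑ j, A i j * X j i := by
      rw [trace]
      apply Finset.sum_congr rfl
      intro i _
      rw [diag_apply, mul_apply]
    rw [e1]
    have e2 : ∀ i j : Fin n, A i j * X j i = φ (Matrix.single j i (X j i)) := by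
      intro i j
      have e3 : Matrix.single j i (X j i) = (X j i) • Matrix.single j i (1 : K) := by
        rw [smul_single, smul_eq_mul, mul_one]
      rw [e3, _root_.map_smul, smul_eq_mul, hA]
      show φ (Matrix.single j i 1) * X j i = X j i * φ (Matrix.single j i 1)
      ring
    rw [Finset.sum_congr rfl fun i _ => Finset.sum_congr rfl fun j _ => e2 i j]
    have hsum : (∑ i, ∑ j, Matrix.single j i (X j i)) = X := by
      rw [Finset.sum_comm]
      exact (matrix_eq_sum_single X).symm
    conv_rhs => rw [← hsum]
    rw [map_sum]
    exact Finset.sum_congr rfl fun i _ => (map_sum φ _ _).symm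
  have hA0 : A ≠ 0 := by
    intro h
    apply hφ0
    apply LinearMap.ext
    intro X
    rw [← htr X, h]
    simp
  have hmem : ∀ X, X ∈ H ↔ trace (A * X) = 0 := by
    intro X
    rw [hHker, LinearMap.mem_ker, ← htr X]
  obtain ⟨L, L', δ, hdiag⟩ := Matrix.Pivot.exists_list_transvec_mul_mul_list_transvec_eq_diagonal A
  set U := (L.map Matrix.TransvectionStruct.toMatrix).prod with hU
  set V := (L'.map Matrix.TransvectionStruct.toMatrix).prod with hV
  have hUdet : IsUnit U.det := by
    rw [hU, Matrix.TransvectionStruct.det_toMatrix_prod]; exact isUnit_one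
  have hVdet : IsUnit V.det := by
    rw [hV, Matrix.TransvectionStruct.det_toMatrix_prod]; exact isUnit_one
  have hU1 : U * U⁻¹ = 1 := Matrix.mul_nonsing_inv U hUdet
  have hU2 : U⁻¹ * U = 1 := Matrix.nonsing_inv_mul U hUdet
  have hV1 : V * V⁻¹ = 1 := Matrix.mul_nonsing_inv V hVdet
  have hV2 : V⁻¹ * V = 1 := Matrix.nonsing_inv_mul V hVdet
  have hδ0 : δ ≠ 0 := by
    intro h
    apply hA0
    have hz : U * A * V = 0 := by rw [hdiag, h]; exact Matrix.diagonal_zero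
    calc A = (U⁻¹ * U) * A * (V * V⁻¹) := by rw [hU2, hV1, Matrix.one_mul, Matrix.mul_one]
      _ = U⁻¹ * (U * A * V) * V⁻¹ := by noncomm_ring
      _ = 0 := by rw [hz]; simp
  obtain ⟨m, rfl⟩ : ∃ m, n = m + 3 := ⟨n - 3, by omega⟩
  obtain ⟨B, Bi, hBBi, hBiB, ht1, ht2⟩ := HypProd.main δ hδ0 (V⁻¹ * (M * A) * U⁻¹)
  refine ⟨V * B * U, ?_, U⁻¹ * Bi * V⁻¹ * M, ?_, ?_⟩
  · rw [hmem]
    have e : A * (V * B * U) = (A * V) * B * U := by noncomm_ring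
    rw [e, Matrix.trace_mul_cycle (A * V) B U]
    have e2 : U * (A * V) * B = Matrix.diagonal δ * B := by
      rw [← Matrix.mul_assoc, hdiag]
    rw [e2]
    exact ht1
  · rw [hmem]
    have e : A * (U⁻¹ * Bi * V⁻¹ * M) = (A * U⁻¹ * Bi * V⁻¹) * M := by noncomm_ring
    rw [e, Matrix.trace_mul_comm]
    have e2 : M * (A * U⁻¹ * Bi * V⁻¹) = (M * A * U⁻¹ * Bi) * V⁻¹ := by noncomm_ring
    rw [e2, Matrix.trace_mul_comm]
    have e3 : V⁻¹ * (M * A * U⁻¹ * Bi) = (V⁻¹ * (M * A) * U⁻¹) * Bi := by noncomm_ring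
    rw [e3]
    exact ht2
  · have e : (V * B * U) * (U⁻¹ * Bi * V⁻¹ * M) = V * (B * ((U * U⁻¹) * Bi)) * (V⁻¹ * M) := by
      noncomm_ring
    rw [e, hU1, Matrix.one_mul, hBBi, Matrix.mul_one, ← Matrix.mul_assoc, hV1, Matrix.one_mul]
end

section
/- Let K be a field and n ≥ 3. Let H_1 and H_2 be linear hyperplanes of M_n(K). Then there exists an invertible matrix P ∈ H_1 such that P⁻¹ ∈ H_2. -/
namespace HypSolve
open Matrix
set_option linter.unusedSectionVars false

variable {K : Type*} [Field K] {n : ℕ}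

section defs
variable (K n)

def Jm (r : ℕ) : Matrix (Fin n) (Fin n) K :=
  Matrix.of fun i j => if i = j ∧ (i : ℕ) < r then 1 else 0

variable [NeZero n]

def cyc : Fin n ≃ Fin n := Equiv.addRight 1

def Cm : Matrix (Fin n) (Fin n) K := (1 : Matrix (Fin n) (Fin n) K).submatrix id ⇑(cyc n)

def Cmi : Matrix (Fin n) (Fin n) K := (1 : Matrix (Fin n) (Fin n) K).submatrix ⇑(cyc n) id

end defs

section basic
variable [NeZero n]

lemma one_submatrix_symm (e : Fin n ≃ Fin n) :
    (1 : Matrix (Fin n) (Fin n) K).submatrix ⇑e id = (1 : Matrix (Fin n) (Fin n) K).submatrix id ⇑e.symm := by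
  ext i j
  simp only [submatrix_apply, id_eq, one_apply, Equiv.eq_symm_apply]

lemma mul_submatrix_one (M : Matrix (Fin n) (Fin n) K) (e : Fin n ≃ Fin n) :
    M * (1 : Matrix (Fin n) (Fin n) K).submatrix id ⇑e = M.submatrix id ⇑e := by
  have h := Matrix.submatrix_mul_equiv M (1 : Matrix (Fin n) (Fin n) K) id (Equiv.refl (Fin n)) ⇑e
  simpa using h

lemma submatrix_one_mul (M : Matrix (Fin n) (Fin n) K) (e : Fin n ≃ Fin n) :
    (1 : Matrix (Fin n) (Fin n) K).submatrix ⇑e id * M = M.submatrix ⇑e id := by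
  have h := Matrix.submatrix_mul_equiv (1 : Matrix (Fin n) (Fin n) K) M ⇑e (Equiv.refl (Fin n)) id
  simpa using h

lemma Cm_mul_Cmi : (Cm K n) * (Cmi K n) = 1 := by
  rw [Cmi, one_submatrix_symm, Cm, mul_submatrix_one]
  rw [show ((1 : Matrix (Fin n) (Fin n) K).submatrix id ⇑(cyc n)).submatrix id ⇑(cyc n).symm
      = (1 : Matrix (Fin n) (Fin n) K).submatrix id (⇑(cyc n) ∘ ⇑(cyc n).symm) from rfl]
  ext i j
  simp [one_apply]

lemma Cmi_mul_Cm : (Cmi K n) * (Cm K n) = 1 := by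
  rw [Cm, Cmi, one_submatrix_symm, mul_submatrix_one]
  rw [show ((1 : Matrix (Fin n) (Fin n) K).submatrix id ⇑(cyc n).symm).submatrix id ⇑(cyc n)
      = (1 : Matrix (Fin n) (Fin n) K).submatrix id (⇑(cyc n).symm ∘ ⇑(cyc n)) from rfl]
  ext i j
  simp [one_apply]

lemma trace_mul_Cm (M : Matrix (Fin n) (Fin n) K) :
    Matrix.trace (M * Cm K n) = ∑ i, M i (cyc n i) := by
  rw [Cm, mul_submatrix_one]
  simp [Matrix.trace, Matrix.diag]

lemma trace_mul_Cmi (M : Matrix (Fin n) (Fin n) K) :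
    Matrix.trace (M * Cmi K n) = ∑ i, M i ((cyc n).symm i) := by
  rw [Cmi, one_submatrix_symm, mul_submatrix_one]
  simp [Matrix.trace, Matrix.diag]

end basic

section fam
variable [NeZero n]

lemma mulE_apply (M : Matrix (Fin n) (Fin n) K) (a b : Fin n) (c : K) (i j : Fin n) :
    (M * Matrix.single a b c) i j = if j = b then M i a * c else 0 := by
  by_cases h : j = b
  · subst h; simp
  · simp [h]

lemma Emul_apply (M : Matrix (Fin n) (Fin n) K) (a b : Fin n) (c : K) (i j : Fin n) :
    (Matrix.single a b c * M) i j = if i = a then c * M b j else 0 := by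
  by_cases h : i = a
  · subst h; simp
  · simp [h]

lemma T_mul_Ti (a b : Fin n) (hab : b ≠ a) (c : K) :
    (1 + Matrix.single a b c) * (1 - Matrix.single a b c) = 1 := by
  have hE : Matrix.single a b c * Matrix.single a b c = 0 :=
    Matrix.single_mul_single_of_ne (c := c) a b a hab c
  rw [mul_sub, mul_one, add_mul, one_mul, hE, add_zero, add_sub_cancel_right]

lemma Ti_mul_T (a b : Fin n) (hab : b ≠ a) (c : K) :
    (1 - Matrix.single a b c) * (1 + Matrix.single a b c) = 1 := by
  have hE : Matrix.single a b c * Matrix.single a b c = 0 :=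
    Matrix.single_mul_single_of_ne (c := c) a b a hab c
  rw [sub_mul, one_mul, mul_add, mul_one, hE, add_zero, add_sub_cancel_right]

/-- Family 1: P = (1 + c E_{a,0}) * C. -/
lemma fam1 (a : Fin n) (ha : a ≠ 0) (c : K) (A B : Matrix (Fin n) (Fin n) K) :
    ∃ P Pi : Matrix (Fin n) (Fin n) K, P * Pi = 1 ∧ Pi * P = 1 ∧
      Matrix.trace (A * P) = (∑ i, A i (cyc n i)) + A ((cyc n).symm 0) a * c ∧
      Matrix.trace (B * Pi) = (∑ i, B i ((cyc n).symm i)) - B 0 ((cyc n).symm a) * c := by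
  have ha' : (0 : Fin n) ≠ a := fun h => ha h.symm
  set E : Matrix (Fin n) (Fin n) K := Matrix.single a (0 : Fin n) c with hEdef
  refine ⟨(1 + E) * Cm K n, Cmi K n * (1 - E), ?_, ?_, ?_, ?_⟩
  · rw [mul_assoc, ← mul_assoc (Cm K n), Cm_mul_Cmi, one_mul, T_mul_Ti a 0 ha' c]
  · rw [mul_assoc, ← mul_assoc (1 - E), Ti_mul_T a 0 ha' c, one_mul, Cmi_mul_Cm]
  · rw [← mul_assoc, trace_mul_Cm]
    have key : ∀ i, (A * (1 + E)) i (cyc n i)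
        = A i (cyc n i) + if i = (cyc n).symm 0 then A i a * c else 0 := by
      intro i
      rw [mul_add, mul_one, Matrix.add_apply, hEdef, mulE_apply]
      congr 1
      simp only [Equiv.apply_eq_iff_eq_symm_apply]
    rw [Finset.sum_congr rfl fun i _ => key i, Finset.sum_add_distrib,
      Finset.sum_ite_eq' Finset.univ ((cyc n).symm 0) (fun i => A i a * c)]
    simp
  · rw [← mul_assoc, mul_sub, mul_one, trace_sub, trace_mul_Cmi]
    congr 1
    have h1 : Matrix.trace (B * Cmi K n * E) = (B * Cmi K n) 0 a * c := by
      rw [Matrix.trace]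
      rw [show ∑ i, (B * Cmi K n * E).diag i
          = ∑ i, (if i = (0:Fin n) then (B * Cmi K n) i a * c else 0) from
        Finset.sum_congr rfl fun i _ => by rw [Matrix.diag_apply, hEdef, mulE_apply]]
      rw [Finset.sum_ite_eq' Finset.univ (0 : Fin n) (fun i => (B * Cmi K n) i a * c)]
      simp
    rw [h1]
    have h2 : (B * Cmi K n) 0 a = B 0 ((cyc n).symm a) := by
      rw [Cmi, one_submatrix_symm, mul_submatrix_one]; rfl
    rw [h2]

end fam

section sol
variable [NeZero n]

lemma mul_Cmi_apply (B : Matrix (Fin n) (Fin n) K) (i j : Fin n) :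
    (B * Cmi K n) i j = B i ((cyc n).symm j) := by
  rw [Cmi, one_submatrix_symm, mul_submatrix_one]; rfl

/-- Family 2: P = diagonal d⁻¹ * C, Pi = C⁻¹ * diagonal d. -/
lemma fam2 (d : Fin n → K) (hd : ∀ i, d i ≠ 0) (A B : Matrix (Fin n) (Fin n) K) :
    ∃ P Pi : Matrix (Fin n) (Fin n) K, P * Pi = 1 ∧ Pi * P = 1 ∧
      Matrix.trace (A * P) = (∑ i, A i (cyc n i) * (d (cyc n i))⁻¹) ∧
      Matrix.trace (B * Pi) = (∑ i, B i ((cyc n).symm i) * d i) := by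
  refine ⟨diagonal (fun i => (d i)⁻¹) * Cm K n, Cmi K n * diagonal d, ?_, ?_, ?_, ?_⟩
  · rw [mul_assoc, ← mul_assoc (Cm K n), Cm_mul_Cmi, one_mul, diagonal_mul_diagonal]
    rw [show (fun i => (d i)⁻¹ * d i) = fun _ => (1:K) from funext fun i => inv_mul_cancel₀ (hd i)]
    exact Matrix.diagonal_one
  · rw [mul_assoc, ← mul_assoc (diagonal d), diagonal_mul_diagonal]
    rw [show (fun i => d i * (d i)⁻¹) = fun _ => (1:K) from funext fun i => mul_inv_cancel₀ (hd i)]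
    rw [Matrix.diagonal_one, one_mul, Cmi_mul_Cm]
  · rw [← mul_assoc, trace_mul_Cm]
    exact Finset.sum_congr rfl fun i _ => by rw [mul_diagonal]
  · rw [← mul_assoc, Matrix.trace]
    refine Finset.sum_congr rfl fun i _ => ?_
    rw [Matrix.diag_apply, mul_diagonal, mul_Cmi_apply]

def Sol (A B : Matrix (Fin n) (Fin n) K) : Prop :=
  ∃ P Pi : Matrix (Fin n) (Fin n) K, P * Pi = 1 ∧ Pi * P = 1 ∧
    Matrix.trace (A * P) = 0 ∧ Matrix.trace (B * Pi) = 0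

lemma mulcancel {R Ri X : Matrix (Fin n) (Fin n) K} (h : R * Ri = 1) :
    R * (Ri * X) = X := by rw [← mul_assoc, h, one_mul]

lemma sol_transfer {R Ri S Si A B : Matrix (Fin n) (Fin n) K}
    (hR : R * Ri = 1) (hR' : Ri * R = 1) (hS : S * Si = 1) (hS' : Si * S = 1)
    (h : Sol (R * A * S) (Si * B * Ri)) : Sol A B := by
  obtain ⟨P, Pi, h1, h2, h3, h4⟩ := h
  refine ⟨S * P * R, Ri * Pi * Si, ?_, ?_, ?_, ?_⟩
  · simp only [mul_assoc]
    rw [mulcancel hR, ← mul_assoc P Pi, h1, one_mul, hS]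
  · simp only [mul_assoc]
    rw [mulcancel hS', ← mul_assoc Pi P, h2, one_mul, hR']
  · have e1 : A * (S * P * R) = (A * S * P) * R := by simp only [mul_assoc]
    have e2 : R * (A * S * P) = R * A * S * P := by simp only [mul_assoc]
    rw [e1, trace_mul_comm, e2]
    exact h3
  · have e1 : B * (Ri * Pi * Si) = (B * Ri * Pi) * Si := by simp only [mul_assoc]
    have e2 : Si * (B * Ri * Pi) = Si * B * Ri * Pi := by simp only [mul_assoc]
    rw [e1, trace_mul_comm, e2]
    exact h4

lemma sol_transpose {A B : Matrix (Fin n) (Fin n) K} (h : Sol Aᵀ Bᵀ) : Sol A B := by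
  obtain ⟨P, Pi, h1, h2, h3, h4⟩ := h
  refine ⟨Pᵀ, Piᵀ, ?_, ?_, ?_, ?_⟩
  · rw [← Matrix.transpose_mul, h2, Matrix.transpose_one]
  · rw [← Matrix.transpose_mul, h1, Matrix.transpose_one]
  · rw [show A * Pᵀ = (P * Aᵀ)ᵀ from by rw [Matrix.transpose_mul, Matrix.transpose_transpose],
      Matrix.trace_transpose, trace_mul_comm]
    exact h3
  · rw [show B * Piᵀ = (Pi * Bᵀ)ᵀ from by rw [Matrix.transpose_mul, Matrix.transpose_transpose],
      Matrix.trace_transpose, trace_mul_comm]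
    exact h4

lemma solX {A B : Matrix (Fin n) (Fin n) K} (hA1 : ∀ i, A i (cyc n i) = 0)
    (a : Fin n) (ha : a ≠ 0) (hA2 : A ((cyc n).symm 0) a = 0)
    (hB : B 0 ((cyc n).symm a) ≠ 0) : Sol A B := by
  obtain ⟨P, Pi, h1, h2, h3, h4⟩ :=
    fam1 a ha ((∑ i, B i ((cyc n).symm i)) / B 0 ((cyc n).symm a)) A B
  refine ⟨P, Pi, h1, h2, ?_, ?_⟩
  · rw [h3, hA2]; simp [hA1]
  · rw [h4, mul_div_cancel₀ _ hB, sub_self]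

lemma solZ0 (hn : 3 ≤ n) {A B : Matrix (Fin n) (Fin n) K} (hA1 : ∀ i, A i (cyc n i) = 0)
    (hw : ∀ i, B i ((cyc n).symm i) = 0) : Sol A B := by
  obtain ⟨P, Pi, h1, h2, h3, h4⟩ := fam1 (K := K) ⟨1, by omega⟩ (by
    intro h; have := congrArg Fin.val h; simp at this) 0 A B
  refine ⟨P, Pi, h1, h2, ?_, ?_⟩
  · rw [h3]; simp [hA1]
  · rw [h4]; simp [hw]

lemma solZ2 {A B : Matrix (Fin n) (Fin n) K} (hA1 : ∀ i, A i (cyc n i) = 0)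
    (p q : Fin n) (hpq : p ≠ q) (hp : B p ((cyc n).symm p) ≠ 0) (hq : B q ((cyc n).symm q) ≠ 0)
    (hrest : ∀ l, l ≠ p → l ≠ q → B l ((cyc n).symm l) = 0) : Sol A B := by
  set d : Fin n → K := fun l => if l = p then -(B q ((cyc n).symm q)) / (B p ((cyc n).symm p)) else 1 with hd
  have hdne : ∀ i, d i ≠ 0 := by
    intro i
    rw [hd]
    by_cases h : i = p
    · simp only [h, if_pos rfl]
      exact div_ne_zero (neg_ne_zero.mpr hq) hp
    · simp [h]
  obtain ⟨P, Pi, h1, h2, h3, h4⟩ := fam2 d hdne A B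
  refine ⟨P, Pi, h1, h2, ?_, ?_⟩
  · rw [h3]; simp [hA1]
  · rw [h4]
    have hsub : ∑ i, B i ((cyc n).symm i) * d i = ∑ i ∈ ({p, q} : Finset (Fin n)), B i ((cyc n).symm i) * d i := by
      refine (Finset.sum_subset (Finset.subset_univ _) ?_).symm
      intro x _ hx
      simp only [Finset.mem_insert, Finset.mem_singleton, not_or] at hx
      rw [hrest x hx.1 hx.2, zero_mul]
    rw [hsub, Finset.sum_pair hpq, hd]
    simp only [if_pos rfl, if_neg (Ne.symm hpq), ↓reduceIte]
    field_simp
    ring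

end sol

section conj
variable [NeZero n]

lemma cyc_apply (i : Fin n) : cyc n i = i + 1 := rfl

lemma cyc_ne_self (hn : 3 ≤ n) (i : Fin n) : cyc n i ≠ i := by
  rw [cyc_apply]
  intro h
  have h1 : (1 : Fin n) = 0 := add_eq_left.mp h
  have := Fin.one_eq_zero_iff.mp h1
  omega

lemma cyc_symm_ne_self (hn : 3 ≤ n) (i : Fin n) : (cyc n).symm i ≠ i := by
  intro h
  have := congrArg (cyc n) h
  rw [Equiv.apply_symm_apply] at this
  exact cyc_ne_self hn i this.symm

lemma jm_superdiag (hn : 3 ≤ n) (r : ℕ) (i : Fin n) : Jm K n r i (cyc n i) = 0 := by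
  show (if i = cyc n i ∧ (i:ℕ) < r then (1:K) else 0) = 0
  rw [if_neg]
  rintro ⟨h, -⟩
  exact cyc_ne_self hn i h.symm

lemma jm_transpose (r : ℕ) : (Jm K n r)ᵀ = Jm K n r := by
  ext i j
  show (if j = i ∧ (j:ℕ) < r then (1:K) else 0) = if i = j ∧ (i:ℕ) < r then 1 else 0
  by_cases h : i = j
  · subst h; rfl
  · rw [if_neg (fun hh => h hh.1.symm), if_neg (fun hh => h hh.1)]

lemma jm_submatrix (r : ℕ) (τ : Equiv.Perm (Fin n)) (hτ : ∀ i, ((τ i : ℕ) < r ↔ (i:ℕ) < r)) :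
    (Jm K n r).submatrix ⇑τ ⇑τ = Jm K n r := by
  ext i j
  show (if τ i = τ j ∧ ((τ i):ℕ) < r then (1:K) else 0) = if i = j ∧ (i:ℕ) < r then 1 else 0
  by_cases h : i = j
  · subst h
    by_cases h3 : (i:ℕ) < r
    · rw [if_pos ⟨rfl, (hτ i).mpr h3⟩, if_pos ⟨rfl, h3⟩]
    · rw [if_neg (fun hh => h3 ((hτ i).mp hh.2)), if_neg (fun hh => h3 hh.2)]
  · rw [if_neg (fun hh => h (τ.injective hh.1)), if_neg (fun hh => h hh.1)]

lemma conjP (r : ℕ) (τ : Equiv.Perm (Fin n)) (hτ : ∀ i, ((τ i : ℕ) < r ↔ (i:ℕ) < r))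
    (B : Matrix (Fin n) (Fin n) K) (h : Sol (Jm K n r) (B.submatrix ⇑τ ⇑τ)) :
    Sol (Jm K n r) B := by
  set R : Matrix (Fin n) (Fin n) K := (1 : Matrix (Fin n) (Fin n) K).submatrix ⇑τ id with hR
  set S : Matrix (Fin n) (Fin n) K := (1 : Matrix (Fin n) (Fin n) K).submatrix id ⇑τ with hS
  have hsub : ∀ M : Matrix (Fin n) (Fin n) K, R * M * S = M.submatrix ⇑τ ⇑τ := by
    intro M
    rw [hR, hS, submatrix_one_mul, mul_submatrix_one]
    rw [Matrix.submatrix_submatrix]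
    rfl
  have hRS : R * S = 1 := by
    have h1 := hsub 1
    rw [mul_one] at h1
    rw [h1, Matrix.submatrix_one_equiv]
  have hSR : S * R = 1 := by
    rw [hR, hS, one_submatrix_symm (K := K) τ, mul_submatrix_one]
    rw [Matrix.submatrix_submatrix]
    have : (⇑τ ∘ ⇑τ.symm) = id := by
      funext x; simp
    rw [this]
    simp
  refine sol_transfer hRS hSR hSR hRS ?_
  rw [hsub, hsub, jm_submatrix r τ hτ]
  exact h

def conjTmat (p q : Fin n) (t : K) (B : Matrix (Fin n) (Fin n) K) : Matrix (Fin n) (Fin n) K :=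
  (1 + Matrix.single p q t) * B * (1 - Matrix.single p q t)

lemma conjTmat_apply (p q : Fin n) (t : K) (B : Matrix (Fin n) (Fin n) K) (i j : Fin n) :
    conjTmat p q t B i j = (B i j + (if i = p then t * B q j else 0))
      - (if j = q then (B i p + (if i = p then t * B q p else 0)) * t else 0) := by
  rw [conjTmat, mul_sub, mul_one, Matrix.sub_apply, mulE_apply]
  have hX : ∀ u v : Fin n, ((1 + Matrix.single p q t) * B) u v
      = B u v + (if u = p then t * B q v else 0) := by
    intro u v
    rw [add_mul, one_mul, Matrix.add_apply, Emul_apply]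
  rw [hX, hX]

lemma E_comm_jm (r : ℕ) (p q : Fin n) (hcut : ((p:ℕ) < r ↔ (q:ℕ) < r)) (t : K) :
    Matrix.single p q t * Jm K n r = Jm K n r * Matrix.single p q t := by
  ext i j
  rw [Emul_apply, mulE_apply]
  show (if i = p then t * (if q = j ∧ (q:ℕ) < r then (1:K) else 0) else 0)
      = if j = q then (if i = p ∧ (i:ℕ) < r then (1:K) else 0) * t else 0
  by_cases h1 : i = p
  · by_cases h2 : j = q
    · subst h1; subst h2
      rw [if_pos rfl, if_pos rfl]
      by_cases h3 : (j:ℕ) < r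
      · rw [if_pos ⟨rfl, h3⟩, if_pos ⟨rfl, hcut.mpr h3⟩]; ring
      · rw [if_neg (fun hh => h3 hh.2), if_neg (fun hh => h3 (hcut.mp hh.2))]; ring
    · rw [if_pos h1, if_neg (fun hh : q = j ∧ (q:ℕ) < r => h2 hh.1.symm), if_neg h2]
      ring
  · by_cases h2 : j = q
    · rw [if_neg h1, if_pos h2, if_neg (fun hh : i = p ∧ (i:ℕ) < r => h1 hh.1)]
      ring
    · rw [if_neg h1, if_neg h2]

lemma conjT (r : ℕ) (p q : Fin n) (hpq : p ≠ q) (hcut : ((p:ℕ) < r ↔ (q:ℕ) < r)) (t : K)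
    (B : Matrix (Fin n) (Fin n) K) (h : Sol (Jm K n r) (conjTmat p q t B)) :
    Sol (Jm K n r) B := by
  set E : Matrix (Fin n) (Fin n) K := Matrix.single p q t with hE
  have h1 : (1 + E) * (1 - E) = 1 := T_mul_Ti p q hpq.symm t
  have h2 : (1 - E) * (1 + E) = 1 := Ti_mul_T p q hpq.symm t
  refine sol_transfer (R := 1 + E) (Ri := 1 - E) (S := 1 - E) (Si := 1 + E) h1 h2 h2 h1 ?_
  have hcomm : (1 + E) * Jm K n r = Jm K n r * (1 + E) := by
    rw [add_mul, mul_add, one_mul, mul_one, hE, E_comm_jm r p q hcut t]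
  rw [hcomm, mul_assoc, h1, mul_one]
  exact h

end conj

section core
variable [NeZero n]

lemma val_one_fin (hn : 3 ≤ n) : ((1 : Fin n) : ℕ) = 1 := by
  rw [Fin.val_one']
  exact Nat.mod_eq_of_lt (by omega)

lemma one_ne_zero_fin (hn : 3 ≤ n) : (1 : Fin n) ≠ 0 := by
  intro h
  have := Fin.one_eq_zero_iff.mp h
  omega

lemma cyc_mk (hn : 3 ≤ n) (v : ℕ) (hv : v < n) (h : v + 1 < n) :
    cyc n ⟨v, hv⟩ = ⟨v + 1, h⟩ := by
  rw [cyc_apply]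
  apply Fin.ext
  rw [Fin.val_add, val_one_fin hn]
  simp only []
  exact Nat.mod_eq_of_lt h

lemma cyc_last (hn : 3 ≤ n) (hv : n - 1 < n) : cyc n ⟨n - 1, hv⟩ = 0 := by
  rw [cyc_apply]
  apply Fin.ext
  rw [Fin.val_add, val_one_fin hn]
  simp only [Fin.val_zero]
  rw [show n - 1 + 1 = n from by omega, Nat.mod_self]

lemma cyc_symm_zero (hn : 3 ≤ n) : (cyc n).symm 0 = ⟨n - 1, by omega⟩ := by
  rw [Equiv.symm_apply_eq]
  exact (cyc_last hn (by omega)).symm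

lemma cyc_symm_mk (hn : 3 ≤ n) (v : ℕ) (hv : v < n) (h : v + 1 < n) :
    (cyc n).symm ⟨v + 1, h⟩ = ⟨v, hv⟩ := by
  rw [Equiv.symm_apply_eq]
  exact (cyc_mk hn v hv h).symm

lemma cyc_zero (hn : 3 ≤ n) : cyc n (0 : Fin n) = 1 := by
  rw [cyc_apply, zero_add]

lemma cyc_symm_one (hn : 3 ≤ n) : (cyc n).symm 1 = 0 := by
  rw [Equiv.symm_apply_eq, cyc_zero hn]

/-- Case: some diagonal entry of B in the top-left r×r block is nonzero. -/
lemma core_diag (hn : 3 ≤ n) (r : ℕ) (hr1 : 1 ≤ r) (B : Matrix (Fin n) (Fin n) K)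
    (p : Fin n) (hp : (p : ℕ) < r) (hBpp : B p p ≠ 0) : Sol (Jm K n r) B := by
  have h0r : (((0 : Fin n)) : ℕ) < r := by
    rw [Fin.val_zero]; omega
  set τ := Equiv.swap (0 : Fin n) p with hτdef
  have hτ : ∀ i, ((τ i : ℕ) < r ↔ (i : ℕ) < r) := by
    intro i
    by_cases h1 : i = 0
    · subst h1; rw [hτdef, Equiv.swap_apply_left]
      exact iff_of_true hp h0r
    · by_cases h2 : i = p
      · subst h2; rw [hτdef, Equiv.swap_apply_right]
        exact iff_of_true h0r hp
      · rw [hτdef, Equiv.swap_apply_of_ne_of_ne h1 h2]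
  apply conjP r τ hτ
  apply solX (jm_superdiag hn r) (1 : Fin n) (one_ne_zero_fin hn)
  · rw [cyc_symm_zero hn]
    show (if (⟨n-1, by omega⟩ : Fin n) = 1 ∧ n - 1 < r then (1:K) else 0) = 0
    rw [if_neg]
    rintro ⟨h, -⟩
    have := congrArg Fin.val h
    rw [val_one_fin hn] at this
    simp only [] at this
    omega
  · rw [cyc_symm_one hn]
    show B.submatrix ⇑τ ⇑τ 0 0 ≠ 0
    rw [Matrix.submatrix_apply, hτdef, Equiv.swap_apply_left]
    exact hBpp

/-- Case: some entry of B in the top-left r×r block is nonzero. -/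
lemma core_block11 (hn : 3 ≤ n) (r : ℕ) (hr1 : 1 ≤ r) (B : Matrix (Fin n) (Fin n) K)
    (p q : Fin n) (hp : (p : ℕ) < r) (hq : (q : ℕ) < r) (hB : B p q ≠ 0) :
    Sol (Jm K n r) B := by
  by_cases hd : ∃ u : Fin n, (u : ℕ) < r ∧ B u u ≠ 0
  · obtain ⟨u, hu1, hu2⟩ := hd
    exact core_diag hn r hr1 B u hu1 hu2
  · push_neg at hd
    have hpq : q ≠ p := by
      intro h
      rw [h] at hB
      exact hB (hd p hp)
    apply conjT r q p hpq (iff_of_true hq hp) 1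
    apply core_diag hn r hr1 _ q hq
    rw [conjTmat_apply]
    rw [if_pos rfl, if_neg hpq]
    rw [hd q hq, one_mul, zero_add, sub_zero]
    exact hB

/-- Case: r ≤ n-2 and some entry of B with row < r ≤ col is nonzero. -/
lemma core_B2 (hn : 3 ≤ n) (r : ℕ) (hr1 : 1 ≤ r) (hr2 : r ≤ n - 2)
    (B : Matrix (Fin n) (Fin n) K)
    (p q : Fin n) (hp : (p : ℕ) < r) (hq : r ≤ (q : ℕ)) (hB : B p q ≠ 0) :
    Sol (Jm K n r) B := by
  have h0r : (((0 : Fin n)) : ℕ) < r := by rw [Fin.val_zero]; omega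
  set kk : Fin n := ⟨r, by omega⟩ with hkk
  have hkkval : (kk : ℕ) = r := rfl
  have hkk0 : kk ≠ 0 := by
    intro h; have := congrArg Fin.val h; rw [hkkval, Fin.val_zero] at this; omega
  have hkkp : kk ≠ p := by
    intro h; have := congrArg Fin.val h; rw [hkkval] at this; omega
  have hpkk : p ≠ kk := fun h => hkkp h.symm
  have hpq : p ≠ q := by
    intro h; rw [h] at hp; omega
  set τ := (Equiv.swap (0 : Fin n) p).trans (Equiv.swap kk q) with hτdef
  have hτ0 : τ 0 = p := by
    rw [hτdef]
    simp only [Equiv.trans_apply, Equiv.swap_apply_left]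
    exact Equiv.swap_apply_of_ne_of_ne hpkk hpq
  have hτk : τ kk = q := by
    rw [hτdef]
    simp only [Equiv.trans_apply]
    rw [Equiv.swap_apply_of_ne_of_ne hkk0 hkkp, Equiv.swap_apply_left]
  have hτ : ∀ i, ((τ i : ℕ) < r ↔ (i : ℕ) < r) := by
    intro i
    rw [hτdef]
    simp only [Equiv.trans_apply]
    have step1 : ((Equiv.swap (0:Fin n) p i : ℕ) < r ↔ (i:ℕ) < r) := by
      by_cases h1 : i = 0
      · subst h1; rw [Equiv.swap_apply_left]; exact iff_of_true hp h0r
      · by_cases h2 : i = p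
        · subst h2; rw [Equiv.swap_apply_right]; exact iff_of_true h0r hp
        · rw [Equiv.swap_apply_of_ne_of_ne h1 h2]
    have step2 : ∀ j : Fin n, ((Equiv.swap kk q j : ℕ) < r ↔ (j:ℕ) < r) := by
      intro j
      by_cases h1 : j = kk
      · rw [h1, Equiv.swap_apply_left]
        exact iff_of_false (by omega) (by rw [hkkval]; omega)
      · by_cases h2 : j = q
        · rw [h2, Equiv.swap_apply_right]
          exact iff_of_false (by rw [hkkval]; omega) (by omega)
        · rw [Equiv.swap_apply_of_ne_of_ne h1 h2]
    rw [step2, step1]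
  apply conjP r τ hτ
  have hr1n : r + 1 < n := by omega
  set a : Fin n := ⟨r + 1, hr1n⟩ with ha
  have haval : (a : ℕ) = r + 1 := rfl
  have hane : a ≠ 0 := by
    intro h; have := congrArg Fin.val h; rw [haval, Fin.val_zero] at this; omega
  apply solX (jm_superdiag hn r) a hane
  · rw [cyc_symm_zero hn]
    show (if (⟨n-1, by omega⟩ : Fin n) = a ∧ n - 1 < r then (1:K) else 0) = 0
    rw [if_neg]
    rintro ⟨-, h2⟩
    omega
  · rw [ha, cyc_symm_mk hn r (by omega) hr1n]
    show B.submatrix ⇑τ ⇑τ 0 kk ≠ 0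
    rw [Matrix.submatrix_apply, hτ0, hτk]
    exact hB

end core

section coreB4
variable [NeZero n]

open Matrix.Pivot Matrix.TransvectionStruct in
/-- Case: B is supported in the bottom-right (n-r)×(n-r) block. -/
lemma core_B4 (hn : 3 ≤ n) (r : ℕ) (hr1 : 1 ≤ r) (hrn : r < n)
    (B : Matrix (Fin n) (Fin n) K)
    (hz : ∀ u v : Fin n, ((u : ℕ) < r ∨ (v : ℕ) < r) → B u v = 0) :
    Sol (Jm K n r) B := by
  set e : Fin r ⊕ Fin (n - r) ≃ Fin n := finSumFinEquiv.trans (finCongr (by omega)) with he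
  have hvl : ∀ a : Fin r, ((e (Sum.inl a)) : ℕ) = (a : ℕ) := by
    intro a; rw [he]; simp
  have hvr : ∀ b : Fin (n - r), ((e (Sum.inr b)) : ℕ) = r + (b : ℕ) := by
    intro b; rw [he]; simp
  set toB : Matrix (Fin r ⊕ Fin (n - r)) (Fin r ⊕ Fin (n - r)) K → Matrix (Fin n) (Fin n) K :=
    fun M => M.submatrix ⇑e.symm ⇑e.symm with htoB
  have toB_mul : ∀ M N, toB M * toB N = toB (M * N) := by
    intro M N
    rw [htoB]
    exact Matrix.submatrix_mul_equiv M N ⇑e.symm e.symm ⇑e.symm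
  have toB_one : toB 1 = 1 := Matrix.submatrix_one_equiv e.symm
  -- the bottom-right block of B
  set B4 : Matrix (Fin (n - r)) (Fin (n - r)) K :=
    Matrix.of (fun a b => B (e (Sum.inr a)) (e (Sum.inr b))) with hB4
  have hBblock : B = toB (Matrix.fromBlocks 0 0 0 B4) := by
    ext i j
    rw [htoB]
    show B i j = (Matrix.fromBlocks 0 0 0 B4) (e.symm i) (e.symm j)
    rcases h1 : e.symm i with a | a <;> rcases h2 : e.symm j with b | b
    · rw [Matrix.fromBlocks_apply₁₁]
      have : i = e (Sum.inl a) := by rw [← h1, Equiv.apply_symm_apply]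
      rw [hz i j (Or.inl (by rw [this, hvl]; exact a.isLt))]
      rfl
    · rw [Matrix.fromBlocks_apply₁₂]
      have : i = e (Sum.inl a) := by rw [← h1, Equiv.apply_symm_apply]
      rw [hz i j (Or.inl (by rw [this, hvl]; exact a.isLt))]
      rfl
    · rw [Matrix.fromBlocks_apply₂₁]
      have : j = e (Sum.inl b) := by rw [← h2, Equiv.apply_symm_apply]
      rw [hz i j (Or.inr (by rw [this, hvl]; exact b.isLt))]
      rfl
    · rw [Matrix.fromBlocks_apply₂₂]
      have hi : i = e (Sum.inr a) := by rw [← h1, Equiv.apply_symm_apply]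
      have hj : j = e (Sum.inr b) := by rw [← h2, Equiv.apply_symm_apply]
      rw [hB4, hi, hj]
      rfl
  have hJblock : Jm K n r = toB (Matrix.fromBlocks 1 0 0 0) := by
    ext i j
    rw [htoB]
    show (if i = j ∧ (i:ℕ) < r then (1:K) else 0) = (Matrix.fromBlocks 1 0 0 0) (e.symm i) (e.symm j)
    rcases h1 : e.symm i with a | a <;> rcases h2 : e.symm j with b | b
    · rw [Matrix.fromBlocks_apply₁₁]
      have hi : i = e (Sum.inl a) := by rw [← h1, Equiv.apply_symm_apply]
      have hj : j = e (Sum.inl b) := by rw [← h2, Equiv.apply_symm_apply]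
      have hir : (i : ℕ) < r := by rw [hi, hvl]; exact a.isLt
      by_cases hab : a = b
      · rw [if_pos ⟨by rw [hi, hj, hab], hir⟩, hab]
        simp
      · rw [if_neg (fun hh => hab (by
          have := hh.1
          rw [hi, hj] at this
          exact Sum.inl.inj (e.injective this)))]
        simp [Matrix.one_apply_ne hab]
    · rw [Matrix.fromBlocks_apply₁₂]
      have hi : i = e (Sum.inl a) := by rw [← h1, Equiv.apply_symm_apply]
      have hj : j = e (Sum.inr b) := by rw [← h2, Equiv.apply_symm_apply]
      rw [if_neg (fun hh => by
        have := hh.1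
        rw [hi, hj] at this
        exact Sum.inl_ne_inr (e.injective this))]
      rfl
    · rw [Matrix.fromBlocks_apply₂₁]
      have hi : i = e (Sum.inr a) := by rw [← h1, Equiv.apply_symm_apply]
      have hj : j = e (Sum.inl b) := by rw [← h2, Equiv.apply_symm_apply]
      rw [if_neg (fun hh => by
        have := hh.1
        rw [hi, hj] at this
        exact Sum.inr_ne_inl (e.injective this))]
      rfl
    · rw [Matrix.fromBlocks_apply₂₂]
      have hi : i = e (Sum.inr a) := by rw [← h1, Equiv.apply_symm_apply]
      rw [if_neg (fun hh => by
        have := hh.2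
        rw [hi, hvr] at this
        omega)]
      rfl
  obtain ⟨L, L', D, hLL'⟩ := exists_list_transvec_mul_mul_list_transvec_eq_diagonal B4
  set U := (L.map toMatrix).prod with hU
  set V := (L'.map toMatrix).prod with hV
  have hUunit : IsUnit U := by
    rw [hU]
    apply List.prod_isUnit
    intro m hm
    rw [List.mem_map] at hm
    obtain ⟨t, -, rfl⟩ := hm
    rw [Matrix.isUnit_iff_isUnit_det, Matrix.TransvectionStruct.det]
    exact isUnit_one
  have hVunit : IsUnit V := by
    rw [hV]
    apply List.prod_isUnit
    intro m hm
    rw [List.mem_map] at hm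
    obtain ⟨t, -, rfl⟩ := hm
    rw [Matrix.isUnit_iff_isUnit_det, Matrix.TransvectionStruct.det]
    exact isUnit_one
  obtain ⟨Uu, hUu⟩ := hUunit
  obtain ⟨Vu, hVu⟩ := hVunit
  have hU1 : U * (↑Uu⁻¹ : Matrix (Fin (n-r)) (Fin (n-r)) K) = 1 := by
    rw [← hUu]; exact Uu.mul_inv
  have hU2 : (↑Uu⁻¹ : Matrix (Fin (n-r)) (Fin (n-r)) K) * U = 1 := by
    rw [← hUu]; exact Uu.inv_mul
  have hV1 : V * (↑Vu⁻¹ : Matrix (Fin (n-r)) (Fin (n-r)) K) = 1 := by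
    rw [← hVu]; exact Vu.mul_inv
  have hV2 : (↑Vu⁻¹ : Matrix (Fin (n-r)) (Fin (n-r)) K) * V = 1 := by
    rw [← hVu]; exact Vu.inv_mul
  -- transfer
  apply sol_transfer (R := toB (Matrix.fromBlocks 1 0 0 (↑Vu⁻¹)))
    (Ri := toB (Matrix.fromBlocks 1 0 0 V))
    (S := toB (Matrix.fromBlocks 1 0 0 (↑Uu⁻¹)))
    (Si := toB (Matrix.fromBlocks 1 0 0 U))
  · rw [toB_mul, Matrix.fromBlocks_multiply]
    simp only [Matrix.mul_zero, Matrix.zero_mul, Matrix.mul_one, Matrix.one_mul,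
      add_zero, zero_add, hV2]
    rw [Matrix.fromBlocks_one, toB_one]
  · rw [toB_mul, Matrix.fromBlocks_multiply]
    simp only [Matrix.mul_zero, Matrix.zero_mul, Matrix.mul_one, Matrix.one_mul,
      add_zero, zero_add, hV1]
    rw [Matrix.fromBlocks_one, toB_one]
  · rw [toB_mul, Matrix.fromBlocks_multiply]
    simp only [Matrix.mul_zero, Matrix.zero_mul, Matrix.mul_one, Matrix.one_mul,
      add_zero, zero_add, hU2]
    rw [Matrix.fromBlocks_one, toB_one]
  · rw [toB_mul, Matrix.fromBlocks_multiply]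
    simp only [Matrix.mul_zero, Matrix.zero_mul, Matrix.mul_one, Matrix.one_mul,
      add_zero, zero_add, hU1]
    rw [Matrix.fromBlocks_one, toB_one]
  · -- Sol (R * Jm * S) (Si * B * Ri)
    have hA : toB (Matrix.fromBlocks 1 0 0 (↑Vu⁻¹)) * Jm K n r * toB (Matrix.fromBlocks 1 0 0 (↑Uu⁻¹))
        = Jm K n r := by
      rw [hJblock, toB_mul, toB_mul, Matrix.fromBlocks_multiply, Matrix.fromBlocks_multiply]
      simp
    have hB' : toB (Matrix.fromBlocks 1 0 0 U) * B * toB (Matrix.fromBlocks 1 0 0 V)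
        = toB (Matrix.fromBlocks 0 0 0 (Matrix.diagonal D)) := by
      rw [hBblock, toB_mul, toB_mul, Matrix.fromBlocks_multiply, Matrix.fromBlocks_multiply]
      simp only [Matrix.mul_zero, Matrix.zero_mul, Matrix.mul_one, Matrix.one_mul,
        add_zero, zero_add]
      rw [hLL']
    rw [hA, hB']
    apply solZ0 hn (jm_superdiag hn r)
    intro i
    have hne : i ≠ (cyc n).symm i := fun h => cyc_symm_ne_self hn i h.symm
    show (Matrix.fromBlocks 0 0 0 (Matrix.diagonal D)) (e.symm i) (e.symm ((cyc n).symm i)) = 0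
    rcases h1 : e.symm i with a | a <;> rcases h2 : e.symm ((cyc n).symm i) with b | b
    · rw [Matrix.fromBlocks_apply₁₁]; rfl
    · rw [Matrix.fromBlocks_apply₁₂]; rfl
    · rw [Matrix.fromBlocks_apply₂₁]; rfl
    · rw [Matrix.fromBlocks_apply₂₂]
      apply Matrix.diagonal_apply_ne
      intro hab
      apply hne
      have : e.symm i = e.symm ((cyc n).symm i) := by rw [h1, h2, hab]
      exact e.symm.injective this

end coreB4

section lastcol
variable [NeZero n]

lemma swap_cut (m : ℕ) (u v : Fin n) (hu : (u : ℕ) < m) (hv : (v : ℕ) < m) (l : Fin n) :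
    ((Equiv.swap u v l : ℕ) < m ↔ (l : ℕ) < m) := by
  by_cases h1 : l = u
  · rw [h1, Equiv.swap_apply_left]; exact iff_of_true hv hu
  · by_cases h2 : l = v
    · rw [h2, Equiv.swap_apply_right]; exact iff_of_true hu hv
    · rw [Equiv.swap_apply_of_ne_of_ne h1 h2]

lemma perm_two (m : ℕ) (a b x y : Fin n) (hab : a ≠ b) (hxy : x ≠ y)
    (ha : (a : ℕ) < m) (hb : (b : ℕ) < m) (hx : (x : ℕ) < m) (hy : (y : ℕ) < m) :
    ∃ τ : Equiv.Perm (Fin n), τ a = x ∧ τ b = y ∧ ∀ l, ((τ l : ℕ) < m ↔ (l : ℕ) < m) := by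
  set τ₁ := Equiv.swap a x with hτ₁
  have hb' : τ₁ b ≠ x := by
    intro h
    rw [show x = τ₁ a from (Equiv.swap_apply_left a x).symm] at h
    exact hab (τ₁.injective h).symm
  have hbval : ((τ₁ b : ℕ) < m) := (swap_cut m a x ha hx b).mpr hb
  set τ₂ := Equiv.swap (τ₁ b) y with hτ₂
  refine ⟨τ₁.trans τ₂, ?_, ?_, ?_⟩
  · simp only [Equiv.trans_apply]
    rw [hτ₁, Equiv.swap_apply_left, hτ₂]
    exact Equiv.swap_apply_of_ne_of_ne (fun h => hb' h.symm) hxy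
  · simp only [Equiv.trans_apply, hτ₂, Equiv.swap_apply_left]
  · intro l
    simp only [Equiv.trans_apply]
    rw [swap_cut m (τ₁ b) y hbval hy (τ₁ l), swap_cut m a x ha hx l]

lemma ne_mk_val (hn : 3 ≤ n) (m : ℕ) (hm : m < n) (l : Fin n) (h : l ≠ ⟨m, hm⟩) :
    (l : ℕ) ≠ m := by
  intro hh
  exact h (Fin.ext hh)

/-- r = n-1, both a nonzero entry in the last column (row i) and last row (col j), i ≠ j. -/
lemma L5pair (hn : 3 ≤ n) (B : Matrix (Fin n) (Fin n) K)
    (hblock : ∀ u v : Fin n, (u : ℕ) < n - 1 → (v : ℕ) < n - 1 → B u v = 0)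
    (i j : Fin n) (hij : i ≠ j) (hi : (i : ℕ) < n - 1) (hj : (j : ℕ) < n - 1)
    (hbi : B i ⟨n-1, by omega⟩ ≠ 0) (hcj : B ⟨n-1, by omega⟩ j ≠ 0) :
    Sol (Jm K n (n-1)) B := by
  set lst : Fin n := ⟨n-1, by omega⟩ with hlst
  set pre : Fin n := ⟨n-2, by omega⟩ with hpre
  have hlv : (lst : ℕ) = n - 1 := rfl
  have hpv : (pre : ℕ) = n - 2 := rfl
  have hcycpre : cyc n pre = lst := by
    rw [hpre, cyc_mk hn (n-2) (by omega) (by omega)]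
    apply Fin.ext
    show n - 2 + 1 = (lst : ℕ)
    rw [hlv]; omega
  have hsympre : (cyc n).symm lst = pre := by
    rw [Equiv.symm_apply_eq, hcycpre]
  have h0pre : (0 : Fin n) ≠ pre := by
    intro h
    have h2 := congrArg Fin.val h
    rw [Fin.val_zero, hpv] at h2
    omega
  have h0lst : (0 : Fin n) ≠ lst := by
    intro h
    have h2 := congrArg Fin.val h
    rw [Fin.val_zero, hlv] at h2
    omega
  obtain ⟨τ, hτ0, hτpre, hτcut⟩ := perm_two (n-1) 0 pre i j h0pre hij
    (by rw [Fin.val_zero]; omega) (by rw [hpv]; omega) hi hj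
  have hτlst : τ lst = lst := by
    have h1 := hτcut lst
    have h2 : ¬((lst : ℕ) < n - 1) := by rw [hlv]; omega
    have h3 : ¬((τ lst : ℕ) < n - 1) := fun hh => h2 (h1.mp hh)
    have h4 := (τ lst).isLt
    apply Fin.ext
    rw [hlv]
    omega
  apply conjP (n-1) τ hτcut
  apply solZ2 (jm_superdiag hn (n-1)) 0 lst h0lst
  · rw [Matrix.submatrix_apply]
    have : (cyc n).symm 0 = lst := by
      rw [Equiv.symm_apply_eq]
      show (0 : Fin n) = cyc n lst
      exact (cyc_last hn (by omega)).symm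
    rw [this, hτ0, hτlst]
    exact hbi
  · rw [Matrix.submatrix_apply, hsympre, hτlst, hτpre]
    exact hcj
  · intro l hl0 hllst
    rw [Matrix.submatrix_apply]
    have hlval : (l : ℕ) < n - 1 := by
      have h5 : (l : ℕ) ≠ n - 1 := fun hh => hllst (Fin.ext (by rw [hlv]; exact hh))
      have := l.isLt
      omega
    have hsymm_ne : ((cyc n).symm l : ℕ) ≠ n - 1 := by
      intro h
      apply hl0
      have h6 : (cyc n).symm l = lst := Fin.ext (by rw [hlv]; exact h)
      have h7 : l = cyc n lst := by rw [← h6, Equiv.apply_symm_apply]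
      rw [h7]
      exact cyc_last hn (by omega)
    have hsymval : (((cyc n).symm l : ℕ)) < n - 1 := by
      have := ((cyc n).symm l).isLt
      omega
    exact hblock _ _ ((hτcut l).mpr hlval) ((hτcut _).mpr hsymval)


lemma lastrow_w_zero (hn : 3 ≤ n) (M : Matrix (Fin n) (Fin n) K)
    (h0 : M 0 ⟨n-1, by omega⟩ = 0)
    (hl : ∀ v : Fin n, (v : ℕ) < n - 1 → M ⟨n-1, by omega⟩ v = 0)
    (hb : ∀ u v : Fin n, (u : ℕ) < n - 1 → (v : ℕ) < n - 1 → M u v = 0) :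
    ∀ u : Fin n, M u ((cyc n).symm u) = 0 := by
  set lst : Fin n := ⟨n-1, by omega⟩ with hlst
  have hlv : (lst : ℕ) = n - 1 := rfl
  have hsymzero : (cyc n).symm 0 = lst := by
    rw [Equiv.symm_apply_eq]
    exact (cyc_last hn (by omega)).symm
  intro u
  by_cases hu0 : u = 0
  · rw [hu0, hsymzero]
    exact h0
  · by_cases hul : u = lst
    · rw [hul]
      have hsympre : ((cyc n).symm lst : ℕ) = n - 2 := by
        have : (cyc n).symm lst = ⟨n-2, by omega⟩ := by
          rw [Equiv.symm_apply_eq, cyc_mk hn (n-2) (by omega) (by omega)]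
          exact Fin.ext (by rw [hlv]; show n - 1 = n - 2 + 1; omega)
        rw [this]
      exact hl _ (by rw [hsympre]; omega)
    · have hu : (u : ℕ) < n - 1 := by
        have h5 : (u : ℕ) ≠ n - 1 := fun hh => hul (Fin.ext (by rw [hlv]; exact hh))
        have := u.isLt
        omega
      have hs : ((cyc n).symm u : ℕ) < n - 1 := by
        have h6 : ((cyc n).symm u : ℕ) ≠ n - 1 := by
          intro h
          apply hu0
          have h7 : (cyc n).symm u = lst := Fin.ext (by rw [hlv]; exact h)
          have h8 : u = cyc n lst := by rw [← h7, Equiv.apply_symm_apply]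
          rw [h8]
          exact cyc_last hn (by omega)
        have := ((cyc n).symm u).isLt
        omega
      exact hb _ _ hu hs

/-- r = n-1, last row of B vanishes on the first n-1 columns. -/
lemma L5two (hn : 3 ≤ n) (B : Matrix (Fin n) (Fin n) K)
    (hblock : ∀ u v : Fin n, (u : ℕ) < n - 1 → (v : ℕ) < n - 1 → B u v = 0)
    (hc : ∀ v : Fin n, (v : ℕ) < n - 1 → B ⟨n-1, by omega⟩ v = 0) :
    Sol (Jm K n (n-1)) B := by
  set lst : Fin n := ⟨n-1, by omega⟩ with hlst
  have hlv : (lst : ℕ) = n - 1 := rfl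
  have h0v : ((0 : Fin n) : ℕ) < n - 1 := by rw [Fin.val_zero]; omega
  by_cases h0 : B 0 lst = 0
  · exact solZ0 hn (jm_superdiag hn (n-1)) (lastrow_w_zero hn B h0 hc hblock)
  · by_cases hex : ∃ l : Fin n, (l : ℕ) < n - 1 ∧ B l lst = 0
    · obtain ⟨l, hl1, hl2⟩ := hex
      have hlst0 : lst ≠ 0 := fun h => by
        have := congrArg Fin.val h; rw [hlv, Fin.val_zero] at this; omega
      have hlstl : lst ≠ l := fun h => by
        have := congrArg Fin.val h; rw [hlv] at this; omega
      set τ := Equiv.swap (0 : Fin n) l with hτ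
      have hτlst : τ lst = lst := Equiv.swap_apply_of_ne_of_ne hlst0 hlstl
      have hτcut : ∀ i, ((τ i : ℕ) < n - 1 ↔ (i : ℕ) < n - 1) :=
        fun i => swap_cut (n-1) 0 l h0v hl1 i
      apply conjP (n-1) τ hτcut
      apply solZ0 hn (jm_superdiag hn (n-1))
      apply lastrow_w_zero hn (B.submatrix ⇑τ ⇑τ)
      · rw [Matrix.submatrix_apply]
        show B (τ 0) (τ lst) = 0
        rw [hτlst, hτ, Equiv.swap_apply_left]
        exact hl2
      · intro v hv
        rw [Matrix.submatrix_apply]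
        show B (τ lst) (τ v) = 0
        rw [hτlst]
        exact hc (τ v) ((hτcut v).mpr hv)
      · intro u v hu hv
        rw [Matrix.submatrix_apply]
        exact hblock _ _ ((hτcut u).mpr hu) ((hτcut v).mpr hv)
    · push_neg at hex
      set one : Fin n := ⟨1, by omega⟩ with hone
      have honev : (one : ℕ) = 1 := rfl
      have h1lt : (one : ℕ) < n - 1 := by rw [honev]; omega
      have h0one : (0 : Fin n) ≠ one := fun h => by
        have := congrArg Fin.val h; rw [Fin.val_zero, honev] at this; omega
      have hBone : B one lst ≠ 0 := hex one h1lt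
      set t : K := -(B 0 lst) / (B one lst) with ht
      apply conjT (n-1) 0 one h0one (iff_of_true h0v h1lt) t
      apply solZ0 hn (jm_superdiag hn (n-1))
      apply lastrow_w_zero hn (conjTmat 0 one t B)
      · rw [conjTmat_apply]
        show (B 0 lst + if (0:Fin n) = 0 then t * B one lst else 0)
          - (if lst = one then (B 0 0 + if (0:Fin n) = 0 then t * B one 0 else 0) * t else 0) = 0
        rw [if_pos rfl, if_pos rfl, if_neg (fun h => by
          have := congrArg Fin.val h; rw [hlv, honev] at this; omega)]
        rw [ht, div_mul_cancel₀ _ hBone]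
        ring
      · intro v hv
        rw [conjTmat_apply]
        show (B lst v + if lst = 0 then t * B one v else 0)
          - (if v = one then (B lst 0 + if lst = 0 then t * B one 0 else 0) * t else 0) = 0
        have hlst0 : lst ≠ (0 : Fin n) := fun h => by
          have := congrArg Fin.val h; rw [hlv, Fin.val_zero] at this; omega
        simp only [if_neg hlst0]
        rw [hc v hv, hc 0 h0v]
        by_cases hvone : v = one
        · rw [if_pos hvone]; ring
        · rw [if_neg hvone]; ring
      · intro u v hu hv
        rw [conjTmat_apply]
        show (B u v + if u = 0 then t * B one v else 0)
          - (if v = one then (B u 0 + if u = 0 then t * B one 0 else 0) * t else 0) = 0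
        rw [hblock u v hu hv]
        have e1 : B one v = 0 := hblock one v h1lt hv
        have e2 : B u 0 = 0 := hblock u 0 hu h0v
        have e3 : B one 0 = 0 := hblock one 0 h1lt h0v
        rw [e1, e2, e3]
        by_cases h1 : u = 0 <;> by_cases h2 : v = one <;> simp [h1, h2]

/-- The case r = n-1 with vanishing top-left block. -/
lemma core_pred (hn : 3 ≤ n) (B : Matrix (Fin n) (Fin n) K)
    (hblock : ∀ u v : Fin n, (u : ℕ) < n - 1 → (v : ℕ) < n - 1 → B u v = 0) :
    Sol (Jm K n (n-1)) B := by
  set lst : Fin n := ⟨n-1, by omega⟩ with hlst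
  have hlv : (lst : ℕ) = n - 1 := rfl
  have h0v : ((0 : Fin n) : ℕ) < n - 1 := by rw [Fin.val_zero]; omega
  by_cases hbne : ∃ u : Fin n, (u : ℕ) < n - 1 ∧ B u lst ≠ 0
  · by_cases hcne : ∃ v : Fin n, (v : ℕ) < n - 1 ∧ B lst v ≠ 0
    · obtain ⟨u, hu, hbu⟩ := hbne
      obtain ⟨v, hv, hcv⟩ := hcne
      by_cases huv : u = v
      · subst huv
        by_cases hb2 : ∃ i : Fin n, (i : ℕ) < n - 1 ∧ i ≠ u ∧ B i lst ≠ 0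
        · obtain ⟨i, hi1, hi2, hi3⟩ := hb2
          exact L5pair hn B hblock i u hi2 hi1 hu hi3 hcv
        · by_cases hc2 : ∃ j : Fin n, (j : ℕ) < n - 1 ∧ j ≠ u ∧ B lst j ≠ 0
          · obtain ⟨j, hj1, hj2, hj3⟩ := hc2
            exact L5pair hn B hblock u j (fun h => hj2 h.symm) hu hj1 hbu hj3
          · push_neg at hb2 hc2
            -- b and c are supported only at u; use a transvection
            have hju : ∃ j' : Fin n, (j' : ℕ) < n - 1 ∧ j' ≠ u := by
              by_cases h : u = 0
              · exact ⟨⟨1, by omega⟩, by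
                  constructor
                  · show (1:ℕ) < n - 1; omega
                  · intro hh
                    have := congrArg Fin.val hh
                    rw [h] at this
                    simp only [Fin.val_zero] at this
                    omega⟩
              · exact ⟨0, h0v, fun hh => h hh.symm⟩
            obtain ⟨j', hj'1, hj'2⟩ := hju
            apply conjT (n-1) j' u (fun h => hj'2 h) (iff_of_true hj'1 hu) 1
            apply L5pair hn (conjTmat j' u 1 B) ?_ j' u hj'2 hj'1 hu ?_ ?_
            · intro x y hx hy
              rw [conjTmat_apply, hblock x y hx hy, hblock u y hu hy]
              have e2 : B x j' = 0 := hblock x j' hx hj'1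
              have e3 : B u j' = 0 := hblock u j' hu hj'1
              rw [e2, e3]
              by_cases h1 : x = j' <;> by_cases h2 : y = u <;> simp [h1, h2]
            · rw [conjTmat_apply]
              show (B j' lst + if j' = j' then 1 * B u lst else 0)
                - (if lst = u then (B j' j' + if j' = j' then 1 * B u j' else 0) * 1 else 0) ≠ 0
              rw [if_pos rfl, if_pos rfl, if_neg (fun h => by
                have := congrArg Fin.val h; rw [hlv] at this; omega)]
              rw [hb2 j' hj'1 hj'2, one_mul, zero_add, sub_zero]
              exact hbu
            · rw [conjTmat_apply]
              show (B lst u + if lst = j' then 1 * B u u else 0)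
                - (if u = u then (B lst j' + if lst = j' then 1 * B u j' else 0) * 1 else 0) ≠ 0
              have hlstj' : lst ≠ j' := fun h => by
                have := congrArg Fin.val h; rw [hlv] at this; omega
              rw [if_pos rfl, if_neg hlstj', if_neg hlstj']
              rw [hc2 j' hj'1 hj'2, zero_add, mul_one, add_zero, sub_zero]
              exact hcv
      · exact L5pair hn B hblock u v huv hu hv hbu hcv
    · push_neg at hcne
      exact L5two hn B hblock hcne
  · push_neg at hbne
    apply sol_transpose
    rw [jm_transpose]
    apply L5two hn Bᵀ
    · intro x y hx hy
      exact hblock y x hy hx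
    · intro v hv
      show B v lst = 0
      exact hbne v hv

end lastcol

section master
variable [NeZero n]

/-- The master case analysis: for any nonzero B and 1 ≤ r ≤ n, Sol (Jm r) B. -/
lemma core (hn : 3 ≤ n) (r : ℕ) (hr1 : 1 ≤ r) (hrn : r ≤ n)
    (B : Matrix (Fin n) (Fin n) K) (hB : B ≠ 0) : Sol (Jm K n r) B := by
  by_cases h11 : ∃ p q : Fin n, (p : ℕ) < r ∧ (q : ℕ) < r ∧ B p q ≠ 0
  · obtain ⟨p, q, hp, hq, h⟩ := h11
    exact core_block11 hn r hr1 B p q hp hq h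
  · push_neg at h11
    have hrn' : r < n := by
      by_contra hcon
      have hr : r = n := by omega
      apply hB
      ext p q
      exact h11 p q (by rw [hr]; exact p.isLt) (by rw [hr]; exact q.isLt)
    by_cases hr2 : r ≤ n - 2
    · by_cases h2 : ∃ p q : Fin n, (p : ℕ) < r ∧ r ≤ (q : ℕ) ∧ B p q ≠ 0
      · obtain ⟨p, q, hp, hq, h⟩ := h2
        exact core_B2 hn r hr1 hr2 B p q hp hq h
      · by_cases h3 : ∃ p q : Fin n, (q : ℕ) < r ∧ r ≤ (p : ℕ) ∧ B p q ≠ 0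
        · obtain ⟨p, q, hq, hp, h⟩ := h3
          apply sol_transpose
          rw [jm_transpose]
          exact core_B2 hn r hr1 hr2 Bᵀ q p hq hp h
        · push_neg at h2 h3
          apply core_B4 hn r hr1 (by omega) B
          intro u v huv
          rcases huv with hu | hv
          · by_cases hv2 : (v : ℕ) < r
            · exact h11 u v hu hv2
            · exact h2 u v hu (by omega)
          · by_cases hu2 : (u : ℕ) < r
            · exact h11 u v hu2 hv
            · exact h3 u v hv (by omega)
    · have hreq : r = n - 1 := by omega
      subst hreq
      exact core_pred hn B h11

open Matrix.Pivot Matrix.TransvectionStruct in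
lemma transvec_prod_isUnit {m : Type*} [Fintype m] [DecidableEq m]
    (L : List (TransvectionStruct m K)) : IsUnit (L.map toMatrix).prod := by
  apply List.prod_isUnit
  intro x hx
  rw [List.mem_map] at hx
  obtain ⟨t, -, rfl⟩ := hx
  rw [Matrix.isUnit_iff_isUnit_det, Matrix.TransvectionStruct.det]
  exact isUnit_one

lemma perm_mul_perm_inv (τ : Equiv.Perm (Fin n)) :
    (1 : Matrix (Fin n) (Fin n) K).submatrix ⇑τ id *
      (1 : Matrix (Fin n) (Fin n) K).submatrix id ⇑τ = 1 := by
  rw [mul_submatrix_one, Matrix.submatrix_submatrix]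
  exact Matrix.submatrix_one_equiv τ

lemma perm_inv_mul_perm (τ : Equiv.Perm (Fin n)) :
    (1 : Matrix (Fin n) (Fin n) K).submatrix id ⇑τ *
      (1 : Matrix (Fin n) (Fin n) K).submatrix ⇑τ id = 1 := by
  rw [one_submatrix_symm (K := K) τ, mul_submatrix_one, Matrix.submatrix_submatrix]
  have : (⇑τ ∘ ⇑τ.symm) = id := by funext x; simp
  rw [this]
  simp

lemma submatrix_conj_eq (τ : Equiv.Perm (Fin n)) (M : Matrix (Fin n) (Fin n) K) :
    (1 : Matrix (Fin n) (Fin n) K).submatrix ⇑τ id * M *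
      (1 : Matrix (Fin n) (Fin n) K).submatrix id ⇑τ = M.submatrix ⇑τ ⇑τ := by
  rw [submatrix_one_mul, mul_submatrix_one, Matrix.submatrix_submatrix]
  rfl

open Matrix.Pivot Matrix.TransvectionStruct in
/-- Rank normal form: any nonzero matrix is equivalent to Jm r with 1 ≤ r ≤ n. -/
lemma reduce_to_jm (hn : 3 ≤ n) (A : Matrix (Fin n) (Fin n) K) (hA : A ≠ 0) :
    ∃ (r : ℕ) (R Ri S Si : Matrix (Fin n) (Fin n) K), 1 ≤ r ∧ r ≤ n ∧
      R * Ri = 1 ∧ Ri * R = 1 ∧ S * Si = 1 ∧ Si * S = 1 ∧ R * A * S = Jm K n r := by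
  classical
  obtain ⟨L, L', D, hLL'⟩ := exists_list_transvec_mul_mul_list_transvec_eq_diagonal A
  obtain ⟨Uu, hUu⟩ := transvec_prod_isUnit (K := K) L
  obtain ⟨Vu, hVu⟩ := transvec_prod_isUnit (K := K) L'
  rw [← hUu, ← hVu] at hLL'
  set E : Fin n → K := fun i => if D i = 0 then 1 else (D i)⁻¹ with hE
  set Ei : Fin n → K := fun i => if D i = 0 then 1 else (D i) with hEi
  have hdiag1 : Matrix.diagonal E * Matrix.diagonal Ei = 1 := by
    rw [Matrix.diagonal_mul_diagonal]
    have hfe : (fun i => E i * Ei i) = fun _ => (1 : K) := by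
      funext i
      rw [hE, hEi]
      by_cases h : D i = 0
      · simp [h]
      · simp [h, inv_mul_cancel₀ h]
    rw [hfe, Matrix.diagonal_one]
  have hdiag2 : Matrix.diagonal Ei * Matrix.diagonal E = 1 := by
    rw [Matrix.diagonal_mul_diagonal]
    have hfe : (fun i => Ei i * E i) = fun _ => (1 : K) := by
      funext i
      rw [hE, hEi]
      by_cases h : D i = 0
      · simp [h]
      · simp [h, mul_inv_cancel₀ h]
    rw [hfe, Matrix.diagonal_one]
  have hw01 : ∀ i, D i * E i = if D i = 0 then 0 else 1 := by
    intro i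
    rw [hE]
    by_cases h : D i = 0
    · simp [h]
    · simp [h, mul_inv_cancel₀ h]
  set r := (Finset.univ.filter (fun i : Fin n => D i ≠ 0)).card with hr
  have hrn : r ≤ n := by
    rw [hr]
    calc (Finset.univ.filter (fun i : Fin n => D i ≠ 0)).card
        ≤ Finset.univ.card := Finset.card_le_card (Finset.filter_subset _ _)
      _ = n := by simp
  have hr1 : 1 ≤ r := by
    by_contra hcon
    have hr0 : (Finset.univ.filter (fun i : Fin n => D i ≠ 0)) = ∅ :=
      Finset.card_eq_zero.mp (by omega)
    have hD0 : ∀ i, D i = 0 := by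
      intro i
      by_contra hD
      have hmem : i ∈ Finset.univ.filter (fun i : Fin n => D i ≠ 0) := by
        simp [hD]
      rw [hr0] at hmem
      exact absurd hmem (Finset.notMem_empty i)
    apply hA
    have hDD : Matrix.diagonal D = 0 := by
      ext i j
      by_cases h : i = j
      · subst h; rw [Matrix.diagonal_apply_eq, hD0]; rfl
      · rw [Matrix.diagonal_apply_ne _ h]; rfl
    have hAexp : A = (↑(Uu⁻¹) : Matrix (Fin n) (Fin n) K) * ((↑Uu : Matrix (Fin n) (Fin n) K) * A * (↑Vu : Matrix (Fin n) (Fin n) K)) * (↑(Vu⁻¹) : Matrix (Fin n) (Fin n) K) := by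
      rw [← Matrix.mul_assoc, ← Matrix.mul_assoc, Uu.inv_mul, Matrix.one_mul, Matrix.mul_assoc,
        Vu.mul_inv, Matrix.mul_one]
    rw [hAexp, hLL', hDD, Matrix.mul_zero, Matrix.zero_mul]
  have e0 : {i : Fin n // (i : ℕ) < r} ≃ Fin r :=
    ⟨fun i => ⟨i.1.1, i.2⟩, fun j => ⟨⟨j.1, lt_of_lt_of_le j.2 hrn⟩, j.2⟩,
      fun i => by ext; rfl, fun j => by ext; rfl⟩
  have c2 : Fintype.card {i : Fin n // (i : ℕ) < r} = r := by
    rw [Fintype.card_congr e0, Fintype.card_fin]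
  have c1 : Fintype.card {i : Fin n // D i ≠ 0} = r := by
    rw [Fintype.card_subtype]
  set eq1 : {i : Fin n // (i : ℕ) < r} ≃ {i : Fin n // D i ≠ 0} :=
    Fintype.equivOfCardEq (by rw [c2, c1]) with heq1
  set eq2 : {i : Fin n // ¬((i : ℕ) < r)} ≃ {i : Fin n // ¬(D i ≠ 0)} :=
    Fintype.equivOfCardEq (by
      rw [Fintype.card_subtype_compl, Fintype.card_subtype_compl, c2, c1]) with heq2
  set τ : Equiv.Perm (Fin n) := Equiv.subtypeCongr eq1 eq2 with hτdef
  have hτ : ∀ i : Fin n, (D (τ i) ≠ 0 ↔ (i : ℕ) < r) := by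
    intro i
    by_cases h : (i : ℕ) < r
    · have htt : τ i = ↑(eq1 ⟨i, h⟩) := by
        rw [hτdef]
        simp [Equiv.subtypeCongr, h]
      rw [htt]
      exact iff_of_true (eq1 ⟨i, h⟩).2 h
    · have htt : τ i = ↑(eq2 ⟨i, h⟩) := by
        rw [hτdef]
        simp [Equiv.subtypeCongr, h]
      rw [htt]
      exact iff_of_false (by simpa using (eq2 ⟨i, h⟩).2) h
  set Pl := (1 : Matrix (Fin n) (Fin n) K).submatrix ⇑τ id with hPl
  set Pr := (1 : Matrix (Fin n) (Fin n) K).submatrix id ⇑τ with hPr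
  have hP1 : Pl * Pr = 1 := perm_mul_perm_inv τ
  have hP2 : Pr * Pl = 1 := perm_inv_mul_perm τ
  refine ⟨r, Pl * (↑Uu : Matrix (Fin n) (Fin n) K),
    (↑(Uu⁻¹) : Matrix (Fin n) (Fin n) K) * Pr,
    (↑Vu : Matrix (Fin n) (Fin n) K) * Matrix.diagonal E * Pr,
    Pl * Matrix.diagonal Ei * (↑(Vu⁻¹) : Matrix (Fin n) (Fin n) K), hr1, hrn, ?_, ?_, ?_, ?_, ?_⟩
  · simp only [Matrix.mul_assoc]
    rw [mulcancel Uu.mul_inv, hP1]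
  · simp only [Matrix.mul_assoc]
    rw [mulcancel hP2, Uu.inv_mul]
  · simp only [Matrix.mul_assoc]
    rw [mulcancel hP2, mulcancel hdiag1, Vu.mul_inv]
  · simp only [Matrix.mul_assoc]
    rw [mulcancel Vu.inv_mul, mulcancel hdiag2, hP1]
  · have step1 : Pl * (↑Uu : Matrix (Fin n) (Fin n) K) * A
        * ((↑Vu : Matrix (Fin n) (Fin n) K) * Matrix.diagonal E * Pr)
        = Pl * (((↑Uu : Matrix (Fin n) (Fin n) K) * A * (↑Vu : Matrix (Fin n) (Fin n) K)) * Matrix.diagonal E) * Pr := by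
      simp only [Matrix.mul_assoc]
    rw [step1, hLL', Matrix.diagonal_mul_diagonal]
    have step2 : Pl * Matrix.diagonal (fun i => D i * E i) * Pr
        = (Matrix.diagonal (fun i => D i * E i)).submatrix ⇑τ ⇑τ := by
      rw [hPl, hPr]
      exact submatrix_conj_eq τ _
    rw [step2, Matrix.submatrix_diagonal _ _ τ.injective]
    ext i j
    by_cases h : i = j
    · subst h
      rw [Matrix.diagonal_apply_eq]
      show D (τ i) * E (τ i) = Jm K n r i i
      rw [hw01]
      show _ = if i = i ∧ (i : ℕ) < r then (1:K) else 0
      by_cases hir : (i : ℕ) < r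
      · rw [if_neg (fun hh => (hτ i).mpr hir hh), if_pos ⟨rfl, hir⟩]
      · rw [if_pos (by
          by_contra hh
          exact hir ((hτ i).mp hh)), if_neg (fun hh => hir hh.2)]
    · rw [Matrix.diagonal_apply_ne _ h]
      show (0:K) = if i = j ∧ (i : ℕ) < r then 1 else 0
      rw [if_neg (fun hh => h hh.1)]

end master

section hyper
variable [NeZero n]

lemma hyper_matrix (hn : 3 ≤ n) (H : Submodule K (Matrix (Fin n) (Fin n) K))
    (hH : Module.finrank K H = n ^ 2 - 1) :
    ∃ A : Matrix (Fin n) (Fin n) K, A ≠ 0 ∧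
      ∀ X : Matrix (Fin n) (Fin n) K, Matrix.trace (A * X) = 0 → X ∈ H := by
  have hdim : Module.finrank K (Matrix (Fin n) (Fin n) K) = n ^ 2 := by
    rw [Module.finrank_matrix]
    simp only [Fintype.card_fin, Module.finrank_self, mul_one]
    rw [pow_two]
  have hsq : 9 ≤ n ^ 2 := by
    have h33 : 3 * 3 ≤ n * n := Nat.mul_le_mul hn hn
    rw [pow_two]; omega
  obtain ⟨W, hW⟩ := Submodule.exists_isCompl H
  have hWdim : Module.finrank K W = 1 := by
    have hadd := Submodule.finrank_add_eq_of_isCompl hW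
    rw [hH, hdim] at hadd
    omega
  set proj := W.linearProjOfIsCompl H hW.symm with hproj
  have hker : ∀ X, ((proj X : W) = 0 ↔ X ∈ H) := by
    intro X
    constructor
    · intro h
      have hmem : X ∈ LinearMap.ker proj := h
      rwa [show LinearMap.ker proj = H from Submodule.ker_projectionOnto hW.symm] at hmem
    · intro h
      show X ∈ LinearMap.ker proj
      rw [show LinearMap.ker proj = H from Submodule.ker_projectionOnto hW.symm]
      exact h
  set b := Module.finBasisOfFinrankEq K W hWdim with hb
  set f : Matrix (Fin n) (Fin n) K →ₗ[K] K := (b.coord 0).comp (proj : _ →ₗ[K] W) with hf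
  have hcoord : ∀ y : W, b.coord 0 y = 0 → y = 0 := by
    intro y hy
    have hrep := b.sum_repr y
    rw [Fin.sum_univ_one] at hrep
    rw [← hrep]
    have h0 : b.repr y 0 = 0 := hy
    rw [h0, zero_smul]
  have hfH : ∀ X, f X = 0 → X ∈ H := by
    intro X hX
    exact (hker X).mp (hcoord _ hX)
  set A : Matrix (Fin n) (Fin n) K :=
    Matrix.of (fun i k => f (Matrix.single k i 1)) with hA
  have htr : ∀ X, Matrix.trace (A * X) = f X := by
    intro X
    have hlhs : Matrix.trace (A * X) = ∑ i, ∑ k, f (Matrix.single k i 1) * X k i := by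
      rw [Matrix.trace]
      apply Finset.sum_congr rfl
      intro i _
      rw [Matrix.diag_apply, Matrix.mul_apply]
      apply Finset.sum_congr rfl
      intro k _
      rfl
    rw [hlhs]
    conv_rhs => rw [Matrix.matrix_eq_sum_single X]
    rw [map_sum]
    rw [Finset.sum_comm]
    apply Finset.sum_congr rfl
    intro i _
    rw [map_sum]
    apply Finset.sum_congr rfl
    intro k _
    have hsm : Matrix.single i k (X i k) = X i k • Matrix.single i k 1 := by
      rw [Matrix.smul_single, smul_eq_mul, mul_one]
    rw [hsm, LinearMap.map_smul, smul_eq_mul, mul_comm]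
  refine ⟨A, ?_, fun X hX => hfH X (by rw [← htr X]; exact hX)⟩
  intro h0
  have hXall : ∀ X : Matrix (Fin n) (Fin n) K, X ∈ H := by
    intro X
    apply hfH
    rw [← htr X, h0, Matrix.zero_mul, Matrix.trace_zero]
  have htop : H = ⊤ := Submodule.eq_top_iff'.mpr hXall
  rw [htop] at hH
  rw [finrank_top, hdim] at hH
  omega

end hyper
end HypSolve

theorem exists_invertible_in_hyperplane_with_inverse_in_hyperplane (K : Type*) [Field K]
    (n : ℕ) (hn : 3 ≤ n) (H₁ H₂ : Submodule K (Matrix (Fin n) (Fin n) K))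
    (hH₁ : Module.finrank K H₁ = n ^ 2 - 1) (hH₂ : Module.finrank K H₂ = n ^ 2 - 1) :
    ∃ P : Matrix (Fin n) (Fin n) K, P ∈ H₁ ∧ IsUnit P ∧ P⁻¹ ∈ H₂ := by
  haveI : NeZero n := ⟨by omega⟩
  obtain ⟨A₁, hA₁, hm₁⟩ := HypSolve.hyper_matrix hn H₁ hH₁
  obtain ⟨A₂, hA₂, hm₂⟩ := HypSolve.hyper_matrix hn H₂ hH₂
  obtain ⟨r, R, Ri, S, Si, hr1, hrn, hR, hR', hS, hS', hRAS⟩ := HypSolve.reduce_to_jm hn A₁ hA₁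
  have hBne : Si * A₂ * Ri ≠ 0 := by
    intro h0
    apply hA₂
    have hexp : A₂ = S * (Si * A₂ * Ri) * R := by
      simp only [Matrix.mul_assoc]
      rw [hR', Matrix.mul_one, ← Matrix.mul_assoc, hS, Matrix.one_mul]
    rw [hexp, h0, Matrix.mul_zero, Matrix.zero_mul]
  have hsol : HypSolve.Sol A₁ A₂ := by
    apply HypSolve.sol_transfer hR hR' hS hS'
    rw [hRAS]
    exact HypSolve.core hn r hr1 hrn _ hBne
  obtain ⟨P, Pi, h1, h2, h3, h4⟩ := hsol
  have hPinv : P⁻¹ = Pi := Matrix.inv_eq_right_inv h1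
  have hunit : IsUnit P := by
    rw [Matrix.isUnit_iff_isUnit_det]
    apply IsUnit.of_mul_eq_one Pi.det
    rw [← Matrix.det_mul, h1, Matrix.det_one]
  exact ⟨P, hm₁ P h3, hunit, by rw [hPinv]; exact hm₂ Pi h4⟩
end

section
/- Let K be a field and let H be a linear hyperplane of M_2(K). Then every matrix of M_2(K) is a product of two elements of H if and only if H is neither conjugate to H_0 := {M ∈ M_2(K) : M_{1,1} = 0} nor conjugate to the upper triangular matrices T_2^+(K) := {M ∈ M_2(K) : M_{2,1} = 0}. -/
open Matrix

-- trace of E * N in coordinates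
lemma trace_mul_expand {K : Type*} [Field K] (E N : Matrix (Fin 2) (Fin 2) K) :
    (E * N).trace = E 0 0 * N 0 0 + E 0 1 * N 1 0 + E 1 0 * N 0 1 + E 1 1 * N 1 1 := by
  simp [Matrix.trace_fin_two, Matrix.mul_apply, Fin.sum_univ_two]
  ring

lemma exists_traceless_inv {K : Type*} [Field K] (E : Matrix (Fin 2) (Fin 2) K) :
    ∃ N : Matrix (Fin 2) (Fin 2) K, N.trace = 0 ∧ (E * N).trace = 0 ∧ N.det ≠ 0 := by
  set e := E 0 0 - E 1 1 with he
  by_cases h0 : e = 0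
  · refine ⟨!![1, 0; 0, -1], ?_, ?_, ?_⟩
    · simp [Matrix.trace_fin_two]
    · rw [trace_mul_expand]; simp; linear_combination h0
    · simp [Matrix.det_fin_two]
  · by_cases hg : E 0 1 ≠ 0
    · refine ⟨!![-(E 0 1 / e), 0; 1, E 0 1 / e], ?_, ?_, ?_⟩
      · simp [Matrix.trace_fin_two]
      · rw [trace_mul_expand]; simp; field_simp; rw [he]; ring
      · simp [Matrix.det_fin_two]
        exact ⟨hg, h0⟩
    · push_neg at hg
      by_cases hf : E 1 0 ≠ 0
      · refine ⟨!![-(E 1 0 / e), 1; 0, E 1 0 / e], ?_, ?_, ?_⟩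
        · simp [Matrix.trace_fin_two]
        · rw [trace_mul_expand]; simp; field_simp; rw [he]; ring
        · simp [Matrix.det_fin_two]
          exact ⟨hf, h0⟩
      · push_neg at hf
        refine ⟨!![0, 1; 1, 0], ?_, ?_, ?_⟩
        · simp [Matrix.trace_fin_two]
        · rw [trace_mul_expand]; simp [hg, hf]
        · simp [Matrix.det_fin_two]

lemma adj2 {K : Type*} [Field K] (B : Matrix (Fin 2) (Fin 2) K) :
    B.adjugate = B.trace • (1 : Matrix (Fin 2) (Fin 2) K) - B := by
  rw [Matrix.eta_fin_two B, Matrix.adjugate_fin_two, Matrix.trace_fin_two]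
  ext i j
  fin_cases i <;> fin_cases j <;> simp [Matrix.one_apply] <;> ring

lemma surj_of_inv {K : Type*} [Field K] (A : Matrix (Fin 2) (Fin 2) K)
    (hA : A.det ≠ 0) (M : Matrix (Fin 2) (Fin 2) K) :
    ∃ B C : Matrix (Fin 2) (Fin 2) K,
      (A * B).trace = 0 ∧ (A * C).trace = 0 ∧ M = B * C := by
  have hAu : IsUnit A.det := isUnit_iff_ne_zero.mpr hA
  have hAinv : A * A⁻¹ = 1 := Matrix.mul_nonsing_inv A hAu
  set t : K := (A * M).trace with ht
  obtain ⟨N, hN0, hEN, hNdet⟩ := exists_traceless_inv (M - t • A⁻¹)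
  set B := A⁻¹ * N with hB
  have hAB : A * B = N := by rw [hB, ← mul_assoc, hAinv, one_mul]
  have hBdet : B.det ≠ 0 := by
    rw [hB, Matrix.det_mul, Matrix.det_nonsing_inv]
    exact mul_ne_zero (by rw [Ring.inverse_eq_inv']; exact inv_ne_zero hA) hNdet
  have hBu : IsUnit B.det := isUnit_iff_ne_zero.mpr hBdet
  have hBinv : B * B⁻¹ = 1 := Matrix.mul_nonsing_inv B hBu
  refine ⟨B, B⁻¹ * M, by rw [hAB]; exact hN0, ?_, by rw [← mul_assoc, hBinv, one_mul]⟩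
  -- trace (A * (B⁻¹ * M)) = 0
  have hMN : (M * N).trace = t * B.trace := by
    have : (M - t • A⁻¹) * N = M * N - t • B := by
      rw [hB, sub_mul, Matrix.smul_mul]
    rw [this] at hEN
    rw [Matrix.trace_sub, Matrix.trace_smul, sub_eq_zero] at hEN
    simpa using hEN
  have hBinv' : B⁻¹ = (B.det)⁻¹ • (B.trace • (1 : Matrix (Fin 2) (Fin 2) K) - B) := by
    rw [Matrix.inv_def, adj2, Ring.inverse_eq_inv']
  rw [hBinv']
  have h1 : A * (B.det⁻¹ • (B.trace • (1 : Matrix (Fin 2) (Fin 2) K) - B) * M)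
      = B.det⁻¹ • (A * ((B.trace • (1 : Matrix (Fin 2) (Fin 2) K) - B) * M)) := by
    rw [Matrix.smul_mul, Matrix.mul_smul]
  have h2 : A * ((B.trace • (1 : Matrix (Fin 2) (Fin 2) K) - B) * M)
      = B.trace • (A * M) - A * B * M := by
    rw [Matrix.sub_mul, mul_sub, Matrix.smul_mul, one_mul, Matrix.mul_smul, mul_assoc, hB, mul_assoc, mul_assoc A⁻¹ N M]
  rw [h1, Matrix.trace_smul, h2, Matrix.trace_sub, Matrix.trace_smul, hAB,
    Matrix.trace_mul_comm N M, hMN]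
  simp [mul_comm, ← ht]

lemma matrix_decomp {K : Type*} [Field K] (M : Matrix (Fin 2) (Fin 2) K) :
    M = M 0 0 • !![(1:K),0;0,0] + M 0 1 • !![(0:K),1;0,0]
      + M 1 0 • !![(0:K),0;1,0] + M 1 1 • !![(0:K),0;0,1] := by
  ext i j
  fin_cases i <;> fin_cases j <;> simp

lemma exists_A {K : Type*} [Field K] (H : Submodule K (Matrix (Fin 2) (Fin 2) K))
    (hH : Module.finrank K H = 3) :
    ∃ A : Matrix (Fin 2) (Fin 2) K, A ≠ 0 ∧
      ∀ M : Matrix (Fin 2) (Fin 2) K, (M ∈ H ↔ (A * M).trace = 0) := by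
  have hfull : Module.finrank K (Matrix (Fin 2) (Fin 2) K) = 4 := by
    rw [Module.finrank_matrix]
    simp
  have hq : Module.finrank K (Matrix (Fin 2) (Fin 2) K ⧸ H) = 1 := by
    have := Submodule.finrank_quotient_add_finrank H
    omega
  have e : (Matrix (Fin 2) (Fin 2) K ⧸ H) ≃ₗ[K] K :=
    LinearEquiv.ofFinrankEq _ _ (by rw [hq, Module.finrank_self])
  set φ : Matrix (Fin 2) (Fin 2) K →ₗ[K] K := e.toLinearMap ∘ₗ H.mkQ with hφ
  have hker : ∀ M, M ∈ H ↔ φ M = 0 := by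
    intro M
    rw [hφ]
    simp only [LinearMap.comp_apply, LinearEquiv.coe_coe]
    rw [LinearEquiv.map_eq_zero_iff]
    exact (Submodule.Quotient.mk_eq_zero H).symm
  refine ⟨!![φ !![(1:K),0;0,0], φ !![(0:K),0;1,0]; φ !![(0:K),1;0,0], φ !![(0:K),0;0,1]],
    ?_, ?_⟩
  · intro h
    have hall : ∀ M : Matrix (Fin 2) (Fin 2) K, φ M = 0 := by
      intro M
      have h00 : φ !![(1:K),0;0,0] = 0 := by
        have := congrFun (congrFun h 0) 0; simpa using this
      have h01 : φ !![(0:K),1;0,0] = 0 := by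
        have := congrFun (congrFun h 1) 0; simpa using this
      have h10 : φ !![(0:K),0;1,0] = 0 := by
        have := congrFun (congrFun h 0) 1; simpa using this
      have h11 : φ !![(0:K),0;0,1] = 0 := by
        have := congrFun (congrFun h 1) 1; simpa using this
      conv_lhs => rw [matrix_decomp M]
      rw [map_add, map_add, map_add, LinearMap.map_smul, LinearMap.map_smul,
        LinearMap.map_smul, LinearMap.map_smul, h00, h01, h10, h11]
      simp
    have hTop : H = ⊤ := by
      rw [Submodule.eq_top_iff']
      intro M; exact (hker M).mpr (hall M)
    rw [hTop] at hH
    rw [finrank_top, hfull] at hH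
    omega
  · intro M
    rw [hker, trace_mul_expand]
    have hφM : φ M = M 0 0 * φ !![(1:K),0;0,0] + M 0 1 * φ !![(0:K),1;0,0]
        + M 1 0 * φ !![(0:K),0;1,0] + M 1 1 * φ !![(0:K),0;0,1] := by
      conv_lhs => rw [matrix_decomp M]
      rw [map_add, map_add, map_add, LinearMap.map_smul, LinearMap.map_smul,
        LinearMap.map_smul, LinearMap.map_smul]
      simp only [smul_eq_mul]
    rw [hφM]
    have e00 : ∀ w x y z : K, !![w,x;y,z] 0 0 = w := fun _ _ _ _ => rfl
    have e01 : ∀ w x y z : K, !![w,x;y,z] 0 1 = x := fun _ _ _ _ => rfl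
    have e10 : ∀ w x y z : K, !![w,x;y,z] 1 0 = y := fun _ _ _ _ => rfl
    have e11 : ∀ w x y z : K, !![w,x;y,z] 1 1 = z := fun _ _ _ _ => rfl
    rw [e00, e01, e10, e11]
    constructor <;> intro h <;> linear_combination h

lemma ker_eq_conj {K : Type*} [Field K] (A P F : Matrix (Fin 2) (Fin 2) K) (c : K)
    (hc : c ≠ 0) (hP : P.det ≠ 0) (hAP : A * P = c • (P * F))
    (H : Submodule K (Matrix (Fin 2) (Fin 2) K))
    (hker : ∀ M, M ∈ H ↔ (A * M).trace = 0) :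
    (H : Set (Matrix (Fin 2) (Fin 2) K)) =
      (fun M => P * M * P⁻¹) '' {M | (F * M).trace = 0} := by
  have hPu : IsUnit P.det := isUnit_iff_ne_zero.mpr hP
  have h1 : P * P⁻¹ = 1 := Matrix.mul_nonsing_inv P hPu
  have h2 : P⁻¹ * P = 1 := Matrix.nonsing_inv_mul P hPu
  have hA : A = c • (P * F * P⁻¹) := by
    rw [← Matrix.smul_mul, ← hAP, mul_assoc, h1, mul_one]
  ext N
  simp only [SetLike.mem_coe, Set.mem_image, Set.mem_setOf_eq]
  rw [hker N]
  constructor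
  · intro h
    refine ⟨P⁻¹ * N * P, ?_, ?_⟩
    · -- (F * (P⁻¹ * N * P)).trace = 0
      have : A * N = c • (P * (F * (P⁻¹ * N * P)) * P⁻¹) := by
        rw [hA]; rw [Matrix.smul_mul]
        congr 1
        rw [show P * (F * (P⁻¹ * N * P)) * P⁻¹ = P * F * P⁻¹ * N * (P * P⁻¹) by noncomm_ring,
          h1, mul_one]
      rw [this, Matrix.trace_smul] at h
      have := (mul_eq_zero.mp (by simpa using h)).resolve_left hc
      rwa [Matrix.trace_mul_comm, ← mul_assoc, ← mul_assoc, h2, one_mul] at this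
    · rw [show P * (P⁻¹ * N * P) * P⁻¹ = (P * P⁻¹) * N * (P * P⁻¹) by noncomm_ring,
        h1, one_mul, mul_one]
  · rintro ⟨M, hM, rfl⟩
    rw [hA]
    rw [Matrix.smul_mul, Matrix.trace_smul]
    have : P * F * P⁻¹ * (P * M * P⁻¹) = P * (F * M) * P⁻¹ := by
      rw [show P * F * P⁻¹ * (P * M * P⁻¹) = P * F * (P⁻¹ * P) * M * P⁻¹ by noncomm_ring,
        h2, mul_one, mul_assoc P F M]
    rw [this, Matrix.trace_mul_comm, ← mul_assoc, h2, one_mul, hM, smul_zero]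

lemma conj_of_singular {K : Type*} [Field K] (A : Matrix (Fin 2) (Fin 2) K)
    (hA : A ≠ 0) (hdet : A.det = 0) :
    (∃ P : Matrix (Fin 2) (Fin 2) K, P.det ≠ 0 ∧ ∃ c : K, c ≠ 0 ∧
        A * P = c • (P * !![(1:K),0;0,0])) ∨
    (∃ P : Matrix (Fin 2) (Fin 2) K, P.det ≠ 0 ∧ ∃ c : K, c ≠ 0 ∧
        A * P = c • (P * !![(0:K),1;0,0])) := by
  set p := A 0 0 with hp'
  set q := A 0 1 with hq'
  set r := A 1 0 with hr'
  set s := A 1 1 with hs'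
  have hA' : A = !![p, q; r, s] := Matrix.eta_fin_two A
  have hd : p * s - q * r = 0 := by rw [hA', Matrix.det_fin_two] at hdet; simpa using hdet
  by_cases ht : p + s = 0
  · -- nilpotent case
    right
    by_cases hq : q ≠ 0
    · refine ⟨!![q, 0; -p, 1], ?_, 1, one_ne_zero, ?_⟩
      · rw [Matrix.det_fin_two_of]
        simpa using hq
      · rw [hA']
        ext i j
        fin_cases i <;> fin_cases j <;>
          simp [Matrix.mul_apply, Fin.sum_univ_two] <;>
          first
            | ring1
            | linear_combination hd
            | linear_combination -hd
            | linear_combination ht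
            | linear_combination -ht
            | linear_combination hd - p * ht
            | linear_combination -hd + p * ht
    · push_neg at hq
      have hps : s = -p := by linear_combination ht
      have hp0 : p = 0 := by
        have h1 : p * s = 0 := by linear_combination hd + r * hq
        rw [hps, mul_neg] at h1
        exact mul_self_eq_zero.mp (neg_eq_zero.mp h1)
      have hs0 : s = 0 := by rw [hps, hp0, neg_zero]
      have hr : r ≠ 0 := by
        intro hr0
        apply hA
        rw [hA', hp0, hq, hr0, hs0]
        ext i j; fin_cases i <;> fin_cases j <;> simp
      refine ⟨!![0, 1; r, 0], ?_, 1, one_ne_zero, ?_⟩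
      · rw [Matrix.det_fin_two_of]
        simpa using hr
      · rw [hA', hp0, hq, hs0]
        ext i j
        fin_cases i <;> fin_cases j <;>
          simp [Matrix.mul_apply, Fin.sum_univ_two]
  · -- trace nonzero case
    left
    by_cases hp : p ≠ 0
    · refine ⟨!![p, q; r, -p], ?_, p + s, ht, ?_⟩
      · rw [Matrix.det_fin_two_of]
        have heq : p * -p - q * r = -(p * (p + s)) := by linear_combination hd
        rw [heq]
        exact neg_ne_zero.mpr (mul_ne_zero hp ht)
      · rw [hA']
        ext i j
        fin_cases i <;> fin_cases j <;>
          simp [Matrix.mul_apply, Fin.sum_univ_two] <;>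
          first
            | ring1
            | linear_combination hd
            | linear_combination -hd
    · push_neg at hp
      have hs : s ≠ 0 := by
        intro h0; exact ht (by rw [hp, h0, add_zero])
      by_cases hr : r ≠ 0
      · have hq0 : q = 0 := by
          have : -(q * r) = 0 := by linear_combination hd - s * (by rw [hp] : p = 0)
          exact (mul_eq_zero.mp (neg_eq_zero.mp this)).resolve_right hr
        refine ⟨!![0, s; r, -r], ?_, p + s, ht, ?_⟩
        · rw [Matrix.det_fin_two_of]
          simpa using ⟨hs, hr⟩
        · rw [hA', hp, hq0]
          ext i j
          fin_cases i <;> fin_cases j <;>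
            simp [Matrix.mul_apply, Fin.sum_univ_two] <;> ring1
      · push_neg at hr
        refine ⟨!![q, 1; s, 0], ?_, p + s, ht, ?_⟩
        · rw [Matrix.det_fin_two_of]
          simpa using hs
        · rw [hA', hp, hr]
          ext i j
          fin_cases i <;> fin_cases j <;>
            simp [Matrix.mul_apply, Fin.sum_univ_two] <;> ring1

lemma ent00 {K : Type*} [Field K] (w x y z : K) : !![w,x;y,z] 0 0 = w := rfl
lemma ent01 {K : Type*} [Field K] (w x y z : K) : !![w,x;y,z] 0 1 = x := rfl
lemma ent10 {K : Type*} [Field K] (w x y z : K) : !![w,x;y,z] 1 0 = y := rfl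
lemma ent11 {K : Type*} [Field K] (w x y z : K) : !![w,x;y,z] 1 1 = z := rfl

lemma conj_cancel {K : Type*} [Field K] {P X Y : Matrix (Fin 2) (Fin 2) K}
    (h1 : P * P⁻¹ = 1) (h2 : P⁻¹ * P = 1) (h : P * X * P⁻¹ = P * Y * P⁻¹) : X = Y := by
  have hX : ∀ Z : Matrix (Fin 2) (Fin 2) K, P⁻¹ * (P * Z * P⁻¹) * P = Z := by
    intro Z
    rw [show P⁻¹ * (P * Z * P⁻¹) * P = (P⁻¹ * P) * Z * (P⁻¹ * P) by noncomm_ring,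
      h2, one_mul, mul_one]
  rw [← hX X, ← hX Y, h]

lemma not_surj_H0 {K : Type*} [Field K] (H : Submodule K (Matrix (Fin 2) (Fin 2) K))
    (P : Matrix (Fin 2) (Fin 2) K) (hP : IsUnit P)
    (hset : (H : Set (Matrix (Fin 2) (Fin 2) K)) =
      (fun M => P * M * P⁻¹) '' {M : Matrix (Fin 2) (Fin 2) K | M 0 0 = 0}) :
    ¬ (∀ M : Matrix (Fin 2) (Fin 2) K, ∃ B ∈ H, ∃ C ∈ H, M = B * C) := by
  have hPd : IsUnit P.det := (Matrix.isUnit_iff_isUnit_det P).mp hP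
  have h1 : P * P⁻¹ = 1 := Matrix.mul_nonsing_inv P hPd
  have h2 : P⁻¹ * P = 1 := Matrix.nonsing_inv_mul P hPd
  intro hsurj
  obtain ⟨B, hB, C, hC, hM⟩ := hsurj (P * !![(0:K),1;1,0] * P⁻¹)
  have hB' : B ∈ (H : Set (Matrix (Fin 2) (Fin 2) K)) := hB
  have hC' : C ∈ (H : Set (Matrix (Fin 2) (Fin 2) K)) := hC
  rw [hset] at hB' hC'
  obtain ⟨B₀, hB₀, rfl⟩ := hB'
  obtain ⟨C₀, hC₀, rfl⟩ := hC'
  simp only [Set.mem_setOf_eq] at hB₀ hC₀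
  have key : !![(0:K),1;1,0] = B₀ * C₀ := by
    apply conj_cancel h1 h2
    rw [hM]
    rw [show P * B₀ * P⁻¹ * (P * C₀ * P⁻¹) = P * B₀ * (P⁻¹ * P) * C₀ * P⁻¹ by noncomm_ring,
      h2, mul_one, mul_assoc P B₀ C₀]
  have k00 := congrFun (congrFun key 0) 0
  have k01 := congrFun (congrFun key 0) 1
  have k10 := congrFun (congrFun key 1) 0
  simp only [Matrix.mul_apply, Fin.sum_univ_two, ent00, ent01, ent10, ent11,
    hB₀, hC₀, zero_mul, mul_zero, zero_add, add_zero] at k00 k01 k10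
  -- k00 : 0 = B₀ 0 1 * C₀ 1 0, k01 : 1 = B₀ 0 1 * C₀ 1 1, k10 : 1 = B₀ 1 1 * C₀ 1 0
  have hB01 : B₀ 0 1 ≠ 0 := by
    intro h; rw [h, zero_mul] at k01; exact one_ne_zero k01
  have hC10 : C₀ 1 0 = 0 := by
    rcases mul_eq_zero.mp k00.symm with h | h
    · exact (hB01 h).elim
    · exact h
  rw [hC10, mul_zero] at k10
  exact one_ne_zero k10

lemma not_surj_T {K : Type*} [Field K] (H : Submodule K (Matrix (Fin 2) (Fin 2) K))
    (P : Matrix (Fin 2) (Fin 2) K) (hP : IsUnit P)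
    (hset : (H : Set (Matrix (Fin 2) (Fin 2) K)) =
      (fun M => P * M * P⁻¹) '' {M : Matrix (Fin 2) (Fin 2) K | M 1 0 = 0}) :
    ¬ (∀ M : Matrix (Fin 2) (Fin 2) K, ∃ B ∈ H, ∃ C ∈ H, M = B * C) := by
  have hPd : IsUnit P.det := (Matrix.isUnit_iff_isUnit_det P).mp hP
  have h1 : P * P⁻¹ = 1 := Matrix.mul_nonsing_inv P hPd
  have h2 : P⁻¹ * P = 1 := Matrix.nonsing_inv_mul P hPd
  intro hsurj
  obtain ⟨B, hB, C, hC, hM⟩ := hsurj (P * !![(0:K),0;1,0] * P⁻¹)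
  have hB' : B ∈ (H : Set (Matrix (Fin 2) (Fin 2) K)) := hB
  have hC' : C ∈ (H : Set (Matrix (Fin 2) (Fin 2) K)) := hC
  rw [hset] at hB' hC'
  obtain ⟨B₀, hB₀, rfl⟩ := hB'
  obtain ⟨C₀, hC₀, rfl⟩ := hC'
  simp only [Set.mem_setOf_eq] at hB₀ hC₀
  have key : !![(0:K),0;1,0] = B₀ * C₀ := by
    apply conj_cancel h1 h2
    rw [hM]
    rw [show P * B₀ * P⁻¹ * (P * C₀ * P⁻¹) = P * B₀ * (P⁻¹ * P) * C₀ * P⁻¹ by noncomm_ring,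
      h2, mul_one, mul_assoc P B₀ C₀]
  have k10 := congrFun (congrFun key 1) 0
  simp only [Matrix.mul_apply, Fin.sum_univ_two, ent00, ent01, ent10, ent11,
    hB₀, hC₀, zero_mul, mul_zero, zero_add, add_zero] at k10
  exact one_ne_zero k10

theorem hyperplane_M2_product_iff (K : Type*) [Field K]
    (H : Submodule K (Matrix (Fin 2) (Fin 2) K)) (hH : Module.finrank K H = 3) :
    (∀ M : Matrix (Fin 2) (Fin 2) K, ∃ B ∈ H, ∃ C ∈ H, M = B * C) ↔
      (¬ ∃ P : Matrix (Fin 2) (Fin 2) K, IsUnit P ∧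
        (H : Set (Matrix (Fin 2) (Fin 2) K)) =
          (fun M => P * M * P⁻¹) '' {M : Matrix (Fin 2) (Fin 2) K | M 0 0 = 0}) ∧
      (¬ ∃ P : Matrix (Fin 2) (Fin 2) K, IsUnit P ∧
        (H : Set (Matrix (Fin 2) (Fin 2) K)) =
          (fun M => P * M * P⁻¹) '' {M : Matrix (Fin 2) (Fin 2) K | M 1 0 = 0}) := by
  constructor
  · intro hsurj
    constructor
    · rintro ⟨P, hP, hset⟩
      exact not_surj_H0 H P hP hset hsurj
    · rintro ⟨P, hP, hset⟩
      exact not_surj_T H P hP hset hsurj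
  · rintro ⟨h0, hT⟩
    obtain ⟨A, hA, hker⟩ := exists_A H hH
    have hdet : A.det ≠ 0 := by
      intro hd
      rcases conj_of_singular A hA hd with ⟨P, hPd, c, hc, hAP⟩ | ⟨P, hPd, c, hc, hAP⟩
      · apply h0
        refine ⟨P, (Matrix.isUnit_iff_isUnit_det P).mpr (isUnit_iff_ne_zero.mpr hPd), ?_⟩
        have hset0 : {M : Matrix (Fin 2) (Fin 2) K | (!![(1:K),0;0,0] * M).trace = 0}
            = {M : Matrix (Fin 2) (Fin 2) K | M 0 0 = 0} := by
          ext M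
          simp only [Set.mem_setOf_eq, trace_mul_expand, ent00, ent01, ent10, ent11]
          constructor <;> intro h <;> linear_combination h
        rw [ker_eq_conj A P _ c hc hPd hAP H hker, hset0]
      · apply hT
        refine ⟨P, (Matrix.isUnit_iff_isUnit_det P).mpr (isUnit_iff_ne_zero.mpr hPd), ?_⟩
        have hsetT : {M : Matrix (Fin 2) (Fin 2) K | (!![(0:K),1;0,0] * M).trace = 0}
            = {M : Matrix (Fin 2) (Fin 2) K | M 1 0 = 0} := by
          ext M
          simp only [Set.mem_setOf_eq, trace_mul_expand, ent00, ent01, ent10, ent11]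
          constructor <;> intro h <;> linear_combination h
        rw [ker_eq_conj A P _ c hc hPd hAP H hker, hsetT]
    intro M
    obtain ⟨B, C, hB, hC, hM⟩ := surj_of_inv A hdet M
    exact ⟨B, (hker B).mpr hB, C, (hker C).mpr hC, hM⟩
end
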